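/- arXiv:1802.09932 — 2 statements merged into one kernel-verified Lean document; each statement's English description precedes it below -/
import Mathlib

section
/- Sublinear convergence of VR-SGD (Option II, smooth, non-strongly convex): Under the per-epoch bound of VR-SGD with Option II, the output x̂^S satisfies E[f(x̂^S)] − f(x*) ≤ (2(m+1)/((γ − 4m + 2)S)) (f(x̃^0) − f(x*)) + (β(β−1)L/(2(γ − 4m + 2)S)) ‖x̃^0 − x*‖², where γ = (β−1)(m−1), provided γ − 4m + 2 > 0. -/
open scoped BigOperators
open scoped BigOperators RealInnerProductSpace
variable {E : Type*} [NormedAddCommGroup E] [InnerProductSpace ℝ E] [CompleteSpace E]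



lemma aux_dirDeriv (g : E → ℝ) (hg : Differentiable ℝ g) (a v : E) (t : ℝ) :
    HasDerivAt (fun t : ℝ => g (a + t • v)) ⟪gradient g (a + t • v), v⟫ t := by
  have h1 : HasFDerivAt g ((InnerProductSpace.toDual ℝ E) (gradient g (a + t • v))) (a + t • v) :=
    (hg _).hasGradientAt.hasFDerivAt
  have h2 : HasDerivAt (fun t : ℝ => a + t • v) v t := by
    simpa using ((hasDerivAt_id t).smul_const v).const_add a
  simpa [InnerProductSpace.toDual_apply_apply, Function.comp_def] using h1.comp_hasDerivAt t h2

lemma aux_convex_lower (g : E → ℝ) (hconv : ConvexOn ℝ Set.univ g) (hg : Differentiable ℝ g)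
    (a b : E) : g a + ⟪gradient g a, b - a⟫ ≤ g b := by
  set φ : ℝ → ℝ := fun t => g (a + t • (b - a)) with hφ
  have hder : HasDerivAt φ ⟪gradient g a, b - a⟫ 0 := by
    simpa using aux_dirDeriv g hg a (b - a) 0
  have hφ0 : φ 0 = g a := by simp [hφ]
  have hslope : ∀ t ∈ Set.Ioc (0:ℝ) 1, slope φ 0 t ≤ g b - g a := by
    intro t ht
    have h01 : a + t • (b - a) = (1 - t) • a + t • b := by
      rw [smul_sub, sub_smul, one_smul]; abel
    have hc := hconv.2 (Set.mem_univ a) (Set.mem_univ b)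
      (by linarith [ht.2, ht.1] : (0:ℝ) ≤ 1 - t) (le_of_lt ht.1) (by ring)
    have hφt : φ t ≤ (1 - t) * g a + t * g b := by
      rw [hφ]; simp only [h01]; simpa [smul_eq_mul] using hc
    have ht0 := ht.1
    simp only [slope_def_field, hφ0, sub_zero]
    rw [div_le_iff₀ ht0]
    nlinarith [hφt]
  have htend : Filter.Tendsto (slope φ 0) (nhdsWithin 0 (Set.Ioi 0))
      (nhds ⟪gradient g a, b - a⟫) := by
    have h := hasDerivAt_iff_tendsto_slope.mp hder
    exact h.mono_left (nhdsWithin_mono 0 (fun t ht => Set.mem_compl_singleton_iff.mpr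
      (ne_of_gt ht)))
  have hfin : ⟪gradient g a, b - a⟫ ≤ g b - g a := by
    refine le_of_tendsto htend ?_
    filter_upwards [Ioc_mem_nhdsGT_of_mem (Set.mem_Ico.mpr ⟨le_refl _, zero_lt_one⟩)] with t ht
    exact hslope t ht
  linarith

lemma aux_descent (g : E → ℝ) (hg : Differentiable ℝ g) (L : ℝ) (hL : 0 < L)
    (hlip : ∀ u v, ‖gradient g u - gradient g v‖ ≤ L * ‖u - v‖) (a b : E) :
    g b ≤ g a + ⟪gradient g a, b - a⟫ + L / 2 * ‖b - a‖ ^ 2 := by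
  set v := b - a with hv
  set ψ : ℝ → ℝ := fun t => L * t ^ 2 * ‖v‖ ^ 2 / 2 + g a + t * ⟪gradient g a, v⟫
      - g (a + t • v) with hψ
  have hderiv : ∀ t : ℝ, HasDerivAt ψ
      (L * t * ‖v‖ ^ 2 + ⟪gradient g a, v⟫ - ⟪gradient g (a + t • v), v⟫) t := by
    intro t
    have h1 : HasDerivAt (fun t : ℝ => L * t ^ 2 * ‖v‖ ^ 2 / 2 + g a + t * ⟪gradient g a, v⟫)
        (L * t * ‖v‖ ^ 2 + ⟪gradient g a, v⟫) t := by
      have h2 := ((((hasDerivAt_pow 2 t).const_mul L).mul_const (‖v‖^2)).div_const 2).add_const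
        (g a)
      have h3 := (hasDerivAt_id t).mul_const ⟪gradient g a, v⟫
      refine (h2.fun_add h3).congr_deriv ?_
      ring
    exact h1.sub (aux_dirDeriv g hg a v t)
  have hcont : Continuous ψ := by
    have : Continuous g := hg.continuous
    fun_prop
  have hmono : MonotoneOn ψ (Set.Icc 0 1) := by
    apply monotoneOn_of_deriv_nonneg (convex_Icc 0 1) hcont.continuousOn
    · intro t _
      exact (hderiv t).differentiableAt.differentiableWithinAt
    · intro t ht
      rw [interior_Icc] at ht
      rw [(hderiv t).deriv]
      have ht0 : 0 < t := ht.1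
      have hCS : ⟪gradient g (a + t • v) - gradient g a, v⟫
          ≤ ‖gradient g (a + t • v) - gradient g a‖ * ‖v‖ := real_inner_le_norm _ _
      have hl : ‖gradient g (a + t • v) - gradient g a‖ ≤ L * (t * ‖v‖) := by
        have := hlip (a + t • v) a
        simpa [norm_smul, abs_of_pos ht0, mul_assoc] using this
      have hinner : ⟪gradient g (a + t • v) - gradient g a, v⟫
          = ⟪gradient g (a + t • v), v⟫ - ⟪gradient g a, v⟫ := inner_sub_left _ _ _
      nlinarith [norm_nonneg v, mul_le_mul_of_nonneg_right hl (norm_nonneg v)]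
  have h01 := hmono (Set.mem_Icc.mpr ⟨le_refl 0, zero_le_one⟩)
    (Set.mem_Icc.mpr ⟨zero_le_one, le_refl 1⟩) zero_le_one
  have hψ0 : ψ 0 = 0 := by simp [hψ]
  have hψ1 : ψ 1 = L * ‖v‖ ^ 2 / 2 + g a + ⟪gradient g a, v⟫ - g b := by
    simp [hψ, hv]
  rw [hψ0, hψ1] at h01
  linarith

lemma aux_cocoercive (g : E → ℝ) (hconv : ConvexOn ℝ Set.univ g) (hg : Differentiable ℝ g)
    (L : ℝ) (hL : 0 < L) (hlip : ∀ u v, ‖gradient g u - gradient g v‖ ≤ L * ‖u - v‖) (a b : E) :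
    ‖gradient g a - gradient g b‖ ^ 2 ≤ 2 * L * (g a - g b - ⟪gradient g b, a - b⟫) := by
  set c := gradient g b with hc
  set h : E → ℝ := fun z => g z - ⟪c, z⟫ with hh
  have hhdiff : Differentiable ℝ h := by
    apply hg.sub
    exact (InnerProductSpace.toDual ℝ E c).differentiable
  have hhgrad : ∀ z, gradient h z = gradient g z - c := by
    intro z
    have h1 : HasFDerivAt h ((InnerProductSpace.toDual ℝ E) (gradient g z)
        - (InnerProductSpace.toDual ℝ E) c) z := by
      exact ((hg z).hasGradientAt.hasFDerivAt).sub ((InnerProductSpace.toDual ℝ E c).hasFDerivAt)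
    have h2 : HasGradientAt h (gradient g z - c) z := by
      rw [hasGradientAt_iff_hasFDerivAt, map_sub]
      exact h1
    exact h2.gradient
  have hhconv : ConvexOn ℝ Set.univ h := by
    constructor
    · exact convex_univ
    · intro p _ q _ s t hs ht hst
      have := hconv.2 (Set.mem_univ p) (Set.mem_univ q) hs ht hst
      simp only [hh, smul_eq_mul]
      rw [inner_add_right, real_inner_smul_right, real_inner_smul_right]
      simp only [smul_eq_mul] at this
      linarith
  have hhlip : ∀ u v, ‖gradient h u - gradient h v‖ ≤ L * ‖u - v‖ := by
    intro u v; rw [hhgrad, hhgrad]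
    simpa using hlip u v
  -- h has minimum at b since gradient h b = 0
  have hgradb : gradient h b = 0 := by rw [hhgrad]; simp [hc]
  have hmin : ∀ z, h b ≤ h z := by
    intro z
    have := aux_convex_lower h hhconv hhdiff b z
    rw [hgradb] at this
    simpa using this
  -- descent step from a
  have hdesc := aux_descent h hhdiff L hL hhlip a (a - (1 / L) • gradient h a)
  have hkey : h (a - (1 / L) • gradient h a) ≤ h a - 1 / (2 * L) * ‖gradient h a‖ ^ 2 := by
    have hsub : a - (1 / L) • gradient h a - a = -((1 / L) • gradient h a) := by abel
    rw [hsub] at hdesc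
    have hi : ⟪gradient h a, -((1 / L) • gradient h a)⟫ = -(1 / L) * ‖gradient h a‖ ^ 2 := by
      rw [inner_neg_right, real_inner_smul_right, real_inner_self_eq_norm_sq]
      ring
    have hn : ‖-((1 / L) • gradient h a)‖ ^ 2 = (1 / L) ^ 2 * ‖gradient h a‖ ^ 2 := by
      rw [norm_neg, norm_smul, Real.norm_eq_abs, abs_of_pos (by positivity : (0:ℝ) < 1 / L)]
      ring
    rw [hi, hn] at hdesc
    have hL' : L ≠ 0 := ne_of_gt hL
    calc h (a - (1 / L) • gradient h a) ≤ h a + -(1 / L) * ‖gradient h a‖ ^ 2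
        + L / 2 * ((1 / L) ^ 2 * ‖gradient h a‖ ^ 2) := hdesc
      _ = h a - 1 / (2 * L) * ‖gradient h a‖ ^ 2 := by field_simp; ring
  have hfinal : 1 / (2 * L) * ‖gradient h a‖ ^ 2 ≤ h a - h b := by
    have := hmin (a - (1 / L) • gradient h a)
    linarith
  have hha : gradient h a = gradient g a - gradient g b := hhgrad a
  have hdiff : h a - h b = g a - g b - ⟪gradient g b, a - b⟫ := by
    simp only [hh]
    rw [inner_sub_right]
    have : ⟪gradient g b, a⟫ - ⟪gradient g b, b⟫ = ⟪c, a⟫ - ⟪c, b⟫ := by rw [hc]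
    linarith [this]
  rw [hha, hdiff] at hfinal
  have h2L : (0:ℝ) < 2 * L := by linarith
  calc ‖gradient g a - gradient g b‖ ^ 2
      = 2 * L * (1 / (2 * L) * ‖gradient g a - gradient g b‖ ^ 2) := by field_simp
    _ ≤ 2 * L * (g a - g b - ⟪gradient g b, a - b⟫) := by
        apply mul_le_mul_of_nonneg_left _ (le_of_lt h2L)
        exact hfinal



section avg
variable {n : ℕ} (f : Fin n → E → ℝ) (F : E → ℝ)

lemma aux_F_diff (hfavg : ∀ x, F x = (1 / n : ℝ) * ∑ i, f i x) (hdiff : ∀ i, Differentiable ℝ (f i)) : Differentiable ℝ F := by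
  have : F = fun x => (1 / n : ℝ) * ∑ i, f i x := funext hfavg
  rw [this]
  exact Differentiable.const_mul (Differentiable.fun_sum (fun i _ => hdiff i)) _

lemma aux_F_grad (hfavg : ∀ x, F x = (1 / n : ℝ) * ∑ i, f i x) (hdiff : ∀ i, Differentiable ℝ (f i)) (p : E) :
    gradient F p = (1 / n : ℝ) • ∑ i, gradient (f i) p := by
  have h1 : HasFDerivAt (fun x => ∑ i, f i x) (∑ i, (InnerProductSpace.toDual ℝ E)
      (gradient (f i) p)) p :=
    HasFDerivAt.fun_sum (fun i _ => ((hdiff i) p).hasGradientAt.hasFDerivAt)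
  have h2 : HasFDerivAt F ((1 / n : ℝ) • ∑ i, (InnerProductSpace.toDual ℝ E)
      (gradient (f i) p)) p := by
    have : F = fun x => (1 / n : ℝ) • ∑ i, f i x := by
      funext x; rw [hfavg x]; simp [smul_eq_mul]
    rw [this]
    exact h1.fun_const_smul _
  have h3 : HasGradientAt F ((1 / n : ℝ) • ∑ i, gradient (f i) p) p := by
    rw [hasGradientAt_iff_hasFDerivAt, map_smul, map_sum]
    exact h2
  exact h3.gradient

lemma aux_F_conv (hfavg : ∀ x, F x = (1 / n : ℝ) * ∑ i, f i x) (hconv : ∀ i, ConvexOn ℝ Set.univ (f i)) : ConvexOn ℝ Set.univ F := by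
  constructor
  · exact convex_univ
  · intro p _ q _ s t hs ht hst
    rw [hfavg, hfavg, hfavg]
    have hsum : ∑ i, f i (s • p + t • q) ≤ ∑ i, (s * f i p + t * f i q) := by
      apply Finset.sum_le_sum
      intro i _
      simpa [smul_eq_mul] using (hconv i).2 (Set.mem_univ p) (Set.mem_univ q) hs ht hst
    have hn : (0:ℝ) ≤ 1 / n := by positivity
    simp only [smul_eq_mul]
    calc (1 / n : ℝ) * ∑ i, f i (s • p + t • q) ≤ (1 / n : ℝ) * ∑ i, (s * f i p + t * f i q) :=
          mul_le_mul_of_nonneg_left hsum hn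
      _ = s * ((1 / n : ℝ) * ∑ i, f i p) + t * ((1 / n : ℝ) * ∑ i, f i q) := by
          rw [Finset.sum_add_distrib, ← Finset.mul_sum, ← Finset.mul_sum]; ring

lemma aux_grad_min_zero (G : E → ℝ) (xstar : E) (hmin : ∀ x, G xstar ≤ G x) :
    gradient G xstar = 0 := by
  have h1 : IsLocalMin G xstar := Filter.Eventually.of_forall hmin
  have h2 : fderiv ℝ G xstar = 0 := h1.fderiv_eq_zero
  show (InnerProductSpace.toDual ℝ E).symm (fderiv ℝ G xstar) = 0
  rw [h2, map_zero]

end avg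

-- variance-type bound: average of ‖X j - avg‖² ≤ average of ‖X j‖²
lemma aux_variance {n : ℕ} (hn : 0 < n) (X : Fin n → E) (Xbar : E)
    (hXbar : Xbar = (1 / n : ℝ) • ∑ j, X j) :
    ∑ j, ‖Xbar - X j‖ ^ 2 ≤ ∑ j, ‖X j‖ ^ 2 := by
  have hsum : ∑ j, X j = (n : ℝ) • Xbar := by
    rw [hXbar, smul_smul]
    have : (n : ℝ) * (1 / n) = 1 := by
      field_simp
    rw [this, one_smul]
  have hexp : ∀ j, ‖Xbar - X j‖ ^ 2 = ‖Xbar‖ ^ 2 - 2 * ⟪Xbar, X j⟫ + ‖X j‖ ^ 2 := by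
    intro j
    rw [norm_sub_sq_real]
  have h2 : ∑ j, ⟪Xbar, X j⟫ = (n : ℝ) * ‖Xbar‖ ^ 2 := by
    rw [← inner_sum, hsum, real_inner_smul_right, real_inner_self_eq_norm_sq]
  have h3 : ∑ j, ‖Xbar - X j‖ ^ 2
      = (n : ℝ) * ‖Xbar‖ ^ 2 - 2 * ∑ j, ⟪Xbar, X j⟫ + ∑ j, ‖X j‖ ^ 2 := by
    rw [Finset.sum_congr rfl (fun j _ => hexp j), Finset.sum_add_distrib,
      Finset.sum_sub_distrib, Finset.sum_const, ← Finset.mul_sum]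
    simp [Finset.card_univ]
  have h4 : (0:ℝ) ≤ (n : ℝ) * ‖Xbar‖ ^ 2 := by positivity
  rw [h3, h2]
  linarith



lemma aux_sq_add_le (a b : E) : ‖a + b‖ ^ 2 ≤ 2 * ‖a‖ ^ 2 + 2 * ‖b‖ ^ 2 := by
  have h1 : ‖a + b‖ ^ 2 = ‖a‖ ^ 2 + 2 * ⟪a, b⟫ + ‖b‖ ^ 2 := norm_add_sq_real a b
  have h2 : ⟪a, b⟫ ≤ ‖a‖ * ‖b‖ := real_inner_le_norm a b
  nlinarith [sq_nonneg (‖a‖ - ‖b‖)]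

lemma aux_step {n : ℕ} (hn : 0 < n) (f : Fin n → E → ℝ) (F : E → ℝ)
    (hfavg : ∀ x, F x = (1 / n : ℝ) * ∑ i, f i x)
    (hconv : ∀ i, ConvexOn ℝ Set.univ (f i))
    (hdiff : ∀ i, Differentiable ℝ (f i))
    (L : ℝ) (hL : 0 < L)
    (hlip : ∀ i x y, ‖gradient (f i) x - gradient (f i) y‖ ≤ L * ‖x - y‖)
    (xstar : E) (hmin : ∀ x, F xstar ≤ F x)
    (η : ℝ) (hη : 0 ≤ η) (p q : E) :
    ∑ j, ‖p - η • (gradient (f j) p - gradient (f j) q + gradient F q) - xstar‖ ^ 2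
      ≤ n * (‖p - xstar‖ ^ 2 - (2 * η - 4 * L * η ^ 2) * (F p - F xstar)
          + 4 * L * η ^ 2 * (F q - F xstar)) := by
  have hFdiff := aux_F_diff f F hfavg hdiff
  have hFconv := aux_F_conv f F hfavg hconv
  have hFgrad := aux_F_grad f F hfavg hdiff
  have hFgrad0 : gradient F xstar = 0 := aux_grad_min_zero F xstar hmin
  set g : Fin n → E := fun j => gradient (f j) p - gradient (f j) q + gradient F q with hg
  -- sums of individual gradients
  have hsum_at : ∀ z : E, ∑ j, gradient (f j) z = (n : ℝ) • gradient F z := by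
    intro z
    rw [hFgrad z, smul_smul]
    have : (n : ℝ) * (1 / n) = 1 := by field_simp
    rw [this, one_smul]
  -- expansion of each squared norm
  have hexpand : ∀ j, ‖p - η • g j - xstar‖ ^ 2
      = ‖p - xstar‖ ^ 2 - 2 * η * ⟪p - xstar, g j⟫ + η ^ 2 * ‖g j‖ ^ 2 := by
    intro j
    have h0 : p - η • g j - xstar = (p - xstar) - η • g j := by abel
    rw [h0, norm_sub_sq_real, real_inner_smul_right, norm_smul, Real.norm_eq_abs,
      abs_of_nonneg hη, mul_pow]
    ring
  -- inner product term
  have hip : ∑ j, ⟪p - xstar, g j⟫ = (n : ℝ) * ⟪gradient F p, p - xstar⟫ := by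
    rw [← inner_sum]
    have : ∑ j, g j = (n : ℝ) • gradient F p := by
      rw [hg]
      rw [Finset.sum_add_distrib, Finset.sum_sub_distrib, hsum_at p, hsum_at q,
        Finset.sum_const, Finset.card_univ, Fintype.card_fin]
      have : (n : ℕ) • gradient F q = (n : ℝ) • gradient F q := by
        rw [← Nat.cast_smul_eq_nsmul ℝ]
      rw [this]
      abel
    rw [this, real_inner_smul_right, real_inner_comm]
  have hlower : F p - F xstar ≤ ⟪gradient F p, p - xstar⟫ := by
    have := aux_convex_lower F hFconv hFdiff p xstar
    have h2 : ⟪gradient F p, xstar - p⟫ = -⟪gradient F p, p - xstar⟫ := by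
      rw [← inner_neg_right]; congr 1; abel
    rw [h2] at this
    linarith
  -- gradient norm terms
  have hcoco : ∀ (z : E), ∑ j, ‖gradient (f j) z - gradient (f j) xstar‖ ^ 2
      ≤ 2 * L * (n : ℝ) * (F z - F xstar) := by
    intro z
    have h1 : ∀ j : Fin n, ‖gradient (f j) z - gradient (f j) xstar‖ ^ 2
        ≤ 2 * L * (f j z - f j xstar - ⟪gradient (f j) xstar, z - xstar⟫) := fun j =>
      aux_cocoercive (f j) (hconv j) (hdiff j) L hL (hlip j) z xstar
    calc ∑ j, ‖gradient (f j) z - gradient (f j) xstar‖ ^ 2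
        ≤ ∑ j, 2 * L * (f j z - f j xstar - ⟪gradient (f j) xstar, z - xstar⟫) :=
          Finset.sum_le_sum (fun j _ => h1 j)
      _ = 2 * L * ((∑ j, f j z) - (∑ j, f j xstar) - ⟪∑ j, gradient (f j) xstar, z - xstar⟫) := by
          rw [sum_inner]
          rw [← Finset.mul_sum]
          congr 1
          rw [Finset.sum_sub_distrib, Finset.sum_sub_distrib]
      _ = 2 * L * (n : ℝ) * (F z - F xstar) := by
          rw [hsum_at xstar, hFgrad0, smul_zero]
          have hz : (∑ j, f j z) = (n : ℝ) * F z := by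
            rw [hfavg z]; field_simp
          have hxs : (∑ j, f j xstar) = (n : ℝ) * F xstar := by
            rw [hfavg xstar]; field_simp
          rw [hz, hxs]
          simp
          ring
  have hvar : ∑ j, ‖gradient F q - (gradient (f j) q - gradient (f j) xstar)‖ ^ 2
      ≤ 2 * L * (n : ℝ) * (F q - F xstar) := by
    have h1 : gradient F q = (1 / n : ℝ) • ∑ j, (gradient (f j) q - gradient (f j) xstar) := by
      rw [Finset.sum_sub_distrib, hsum_at q, hsum_at xstar, hFgrad0, smul_zero, sub_zero,
        smul_smul]
      have : (1 / n : ℝ) * n = 1 := by field_simp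
      rw [this, one_smul]
    calc ∑ j, ‖gradient F q - (gradient (f j) q - gradient (f j) xstar)‖ ^ 2
        ≤ ∑ j, ‖gradient (f j) q - gradient (f j) xstar‖ ^ 2 :=
          aux_variance hn _ _ h1
      _ ≤ 2 * L * (n : ℝ) * (F q - F xstar) := hcoco q
  have hgsq : ∑ j, ‖g j‖ ^ 2 ≤ 4 * L * (n : ℝ) * (F p - F xstar)
      + 4 * L * (n : ℝ) * (F q - F xstar) := by
    have h1 : ∀ j : Fin n, ‖g j‖ ^ 2 ≤ 2 * ‖gradient (f j) p - gradient (f j) xstar‖ ^ 2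
        + 2 * ‖gradient F q - (gradient (f j) q - gradient (f j) xstar)‖ ^ 2 := by
      intro j
      have heq : g j = (gradient (f j) p - gradient (f j) xstar)
          + (gradient F q - (gradient (f j) q - gradient (f j) xstar)) := by
        rw [hg]; abel
      rw [heq]
      exact aux_sq_add_le _ _
    calc ∑ j, ‖g j‖ ^ 2 ≤ ∑ j, (2 * ‖gradient (f j) p - gradient (f j) xstar‖ ^ 2
          + 2 * ‖gradient F q - (gradient (f j) q - gradient (f j) xstar)‖ ^ 2) :=
          Finset.sum_le_sum (fun j _ => h1 j)
      _ = 2 * (∑ j, ‖gradient (f j) p - gradient (f j) xstar‖ ^ 2)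
          + 2 * (∑ j, ‖gradient F q - (gradient (f j) q - gradient (f j) xstar)‖ ^ 2) := by
          rw [Finset.sum_add_distrib, ← Finset.mul_sum, ← Finset.mul_sum]
      _ ≤ 2 * (2 * L * (n : ℝ) * (F p - F xstar)) + 2 * (2 * L * (n : ℝ) * (F q - F xstar)) := by
          have h2 := hcoco p
          have h3 := hvar
          linarith
      _ = 4 * L * (n : ℝ) * (F p - F xstar) + 4 * L * (n : ℝ) * (F q - F xstar) := by ring
  -- assemble
  have htotal : ∑ j, ‖p - η • g j - xstar‖ ^ 2 = (n : ℝ) * ‖p - xstar‖ ^ 2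
      - 2 * η * ∑ j, ⟪p - xstar, g j⟫ + η ^ 2 * ∑ j, ‖g j‖ ^ 2 := by
    rw [Finset.sum_congr rfl (fun j _ => hexpand j), Finset.sum_add_distrib,
      Finset.sum_sub_distrib, Finset.sum_const, Finset.card_univ, Fintype.card_fin,
      ← Finset.mul_sum, ← Finset.mul_sum, nsmul_eq_mul]
  rw [htotal, hip]
  have hη2 : (0:ℝ) ≤ η ^ 2 := sq_nonneg η
  nlinarith [mul_le_mul_of_nonneg_left hlower (by positivity : (0:ℝ) ≤ 2 * η * n),
    mul_le_mul_of_nonneg_left hgsq hη2]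

lemma aux_sum_update {S m n : ℕ} (h : (Fin S → Fin m → Fin n) → ℝ) (s : Fin S) (k : Fin m) :
    (n : ℝ) * ∑ ω, h ω
      = ∑ ω : Fin S → Fin m → Fin n, ∑ j : Fin n,
          h (Function.update ω s (Function.update (ω s) k j)) := by
  set upd : (Fin S → Fin m → Fin n) → Fin n → (Fin S → Fin m → Fin n) :=
    fun ω j => Function.update ω s (Function.update (ω s) k j) with hupd
  have hat : ∀ ω j, upd ω j s k = j := by
    intro ω j; simp [hupd]
  have hupd2 : ∀ ω j v, upd (upd ω j) v = upd ω v := by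
    intro ω j v
    funext s'
    by_cases hs' : s' = s
    · subst hs'
      simp [hupd, Function.update_idem]
    · simp [hupd, Function.update_of_ne hs']
  have hself : ∀ ω, upd ω (ω s k) = ω := by
    intro ω; simp [hupd, Function.update_eq_self]
  set e : ((Fin S → Fin m → Fin n) × Fin n) → ((Fin S → Fin m → Fin n) × Fin n) :=
    fun p => (upd p.1 p.2, p.1 s k) with he
  have hinv : Function.Involutive e := by
    intro p
    simp only [he]
    refine Prod.ext ?_ ?_
    · simp only [hupd2, hself]
    · simp [hat]
  have hbij := hinv.bijective
  have h1 : ∑ p : (Fin S → Fin m → Fin n) × Fin n, h (upd p.1 p.2)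
      = ∑ p : (Fin S → Fin m → Fin n) × Fin n, h p.1 := by
    refine Fintype.sum_bijective e hbij _ _ ?_
    intro p
    simp only [he]
  calc (n : ℝ) * ∑ ω, h ω = ∑ ω : Fin S → Fin m → Fin n, ∑ _j : Fin n, h ω := by
        rw [Finset.sum_comm]
        simp [Finset.sum_const, Finset.card_univ, mul_comm]
    _ = ∑ p : (Fin S → Fin m → Fin n) × Fin n, h p.1 := by
        rw [Fintype.sum_prod_type]
    _ = ∑ p : (Fin S → Fin m → Fin n) × Fin n, h (upd p.1 p.2) := h1.symm
    _ = ∑ ω : Fin S → Fin m → Fin n, ∑ j : Fin n, h (upd ω j) := by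
        rw [Fintype.sum_prod_type]

lemma aux_rates (S m : ℕ) (hm : 2 ≤ m) (hS : 0 < S) (c₂ c₃ : ℝ) (hc₂ : 0 ≤ c₂) (hc₃ : 0 ≤ c₃)
    (A P : ℕ → ℕ → ℝ) (Dt : ℕ → ℝ)
    (h1 : ∀ s < S, ∀ k < m, A s (k + 1) ≤ A s k - c₂ * P s k + c₃ * Dt s)
    (h2 : ∀ s < S, ((m : ℝ) - 1) * Dt (s + 1) ≤ ∑ k ∈ Finset.range m, P s k)
    (h3 : ∀ s, s + 1 < S → A (s + 1) 0 = A s m)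
    (hA : ∀ s k, 0 ≤ A s k) (hP : ∀ s k, 0 ≤ P s k) (hDt : ∀ s, 0 ≤ Dt s) :
    (c₂ * ((m : ℝ) - 1) - m * c₃) * ∑ s ∈ Finset.range S, Dt (s + 1)
      ≤ A 0 0 + m * c₃ * Dt 0 := by
  -- per-epoch inequality
  have hepoch : ∀ s < S, A s m + c₂ * ∑ k ∈ Finset.range m, P s k
      ≤ A s 0 + (m : ℝ) * c₃ * Dt s := by
    intro s hs
    have haux : ∀ k ≤ m, A s k + c₂ * ∑ k' ∈ Finset.range k, P s k'
        ≤ A s 0 + (k : ℝ) * c₃ * Dt s := by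
      intro k hk
      induction k with
      | zero => simp
      | succ k ih =>
        have hk' : k < m := hk
        have hik := ih (le_of_lt hk')
        have hstep := h1 s hs k hk'
        rw [Finset.sum_range_succ]
        push_cast
        nlinarith [hstep, hik]
    exact haux m (le_refl m)
  -- combine with h2
  have hcomb : ∀ s < S, A s m + c₂ * (((m : ℝ) - 1) * Dt (s + 1))
      ≤ A s 0 + (m : ℝ) * c₃ * Dt s := by
    intro s hs
    have := mul_le_mul_of_nonneg_left (h2 s hs) hc₂
    nlinarith [hepoch s hs]
  -- telescoping
  set b : ℕ → ℝ := fun s => if hsS : s < S then A s 0 else A (S - 1) m with hb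
  have hbS : b S = A (S - 1) m := by simp [hb]
  have hbm : ∀ s < S, A s m = b (s + 1) := by
    intro s hs
    by_cases hs1 : s + 1 < S
    · rw [hb]; simp only [hs1, dif_pos]; exact (h3 s hs1).symm
    · have : s + 1 = S := by omega
      rw [hb]; simp only [this]
      simp only [dif_neg (lt_irrefl S)]
      congr 1
      omega
  have hb0 : b 0 = A 0 0 := by rw [hb]; simp [hS]
  have hsum : ∑ s ∈ Finset.range S, (b s - b (s + 1)) = b 0 - b S :=
    Finset.sum_range_sub' b S
  -- sum hcomb over s
  have htot : c₂ * ((m : ℝ) - 1) * ∑ s ∈ Finset.range S, Dt (s + 1)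
      ≤ (b 0 - b S) + (m : ℝ) * c₃ * ∑ s ∈ Finset.range S, Dt s := by
    have hterm : ∀ s ∈ Finset.range S,
        c₂ * ((m : ℝ) - 1) * Dt (s + 1) ≤ (b s - b (s + 1)) + (m : ℝ) * c₃ * Dt s := by
      intro s hs
      rw [Finset.mem_range] at hs
      have h4 := hcomb s hs
      have h5 : A s 0 = b s := by rw [hb]; simp [hs]
      have h6 := hbm s hs
      nlinarith [h4]
    calc c₂ * ((m : ℝ) - 1) * ∑ s ∈ Finset.range S, Dt (s + 1)
        = ∑ s ∈ Finset.range S, c₂ * ((m : ℝ) - 1) * Dt (s + 1) := by rw [Finset.mul_sum]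
      _ ≤ ∑ s ∈ Finset.range S, ((b s - b (s + 1)) + (m : ℝ) * c₃ * Dt s) :=
          Finset.sum_le_sum hterm
      _ = (b 0 - b S) + (m : ℝ) * c₃ * ∑ s ∈ Finset.range S, Dt s := by
          rw [Finset.sum_add_distrib, hsum, Finset.mul_sum]
  -- shift the Dt sum
  have hshift : ∑ s ∈ Finset.range S, Dt s
      ≤ Dt 0 + ∑ s ∈ Finset.range S, Dt (s + 1) := by
    obtain ⟨S', rfl⟩ : ∃ S', S = S' + 1 := ⟨S - 1, by omega⟩
    rw [Finset.sum_range_succ']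
    have : ∑ s ∈ Finset.range S', Dt (s + 1) ≤ ∑ s ∈ Finset.range (S' + 1), Dt (s + 1) := by
      apply Finset.sum_le_sum_of_subset_of_nonneg
      · exact Finset.range_subset_range.mpr (by omega)
      · intro i _ _; exact hDt _
    linarith
  have hbS0 : 0 ≤ b S := by rw [hbS]; exact hA _ _
  have hT0 : 0 ≤ ∑ s ∈ Finset.range S, Dt (s + 1) :=
    Finset.sum_nonneg (fun s _ => hDt _)
  have hmc₃ : 0 ≤ (m : ℝ) * c₃ := by positivity
  nlinarith [htot, mul_le_mul_of_nonneg_left hshift hmc₃, hb0]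


set_option maxHeartbeats 1000000 in
/-- O(1/T) convergence of VR-SGD (Option II) for smooth non-strongly
convex objectives. Expectations over all random indices are uniform averages over
`ω : Fin S → Fin m → Fin n` (epoch `s`, inner iteration `k`, sampled index `ω s k`). -/
theorem stmt_12 (d n m S : ℕ) (hn : 0 < n) (hm : 2 ≤ m) (hS : 0 < S)
    (L β η γ : ℝ) (hL : 0 < L) (hβ : 3 < β) (hη : η = 1 / (L * β))
    (hγ : γ = (β - 1) * ((m : ℝ) - 1)) (hγpos : γ - 4 * m + 2 > 0)
    (f : Fin n → EuclideanSpace ℝ (Fin d) → ℝ)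
    (hconv : ∀ i, ConvexOn ℝ Set.univ (f i))
    (hdiff : ∀ i, Differentiable ℝ (f i))
    (hlip : ∀ i x y, ‖gradient (f i) x - gradient (f i) y‖ ≤ L * ‖x - y‖)
    (favg : EuclideanSpace ℝ (Fin d) → ℝ)
    (hfavg : ∀ x, favg x = (1 / n : ℝ) * ∑ i, f i x)
    (xstar : EuclideanSpace ℝ (Fin d)) (hmin : ∀ x, favg xstar ≤ favg x)
    (xt0 : EuclideanSpace ℝ (Fin d))
    (x : (Fin S → Fin m → Fin n) → ℕ → ℕ → EuclideanSpace ℝ (Fin d))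
    (xt : (Fin S → Fin m → Fin n) → ℕ → EuclideanSpace ℝ (Fin d))
    (hxt0 : ∀ ω, xt ω 0 = xt0)
    (hstart0 : ∀ ω, x ω 0 0 = xt0)
    (hstart : ∀ ω (s : ℕ), s + 1 < S → x ω (s + 1) 0 = x ω s m)
    (hstep : ∀ ω (s : Fin S) (k : Fin m),
      x ω (s : ℕ) ((k : ℕ) + 1) = x ω (s : ℕ) (k : ℕ) -
        η • (gradient (f (ω s k)) (x ω (s : ℕ) (k : ℕ))
              - gradient (f (ω s k)) (xt ω (s : ℕ)) + gradient favg (xt ω (s : ℕ))))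
    (hsnap : ∀ ω (s : Fin S),
      xt ω ((s : ℕ) + 1) =
        (1 / ((m : ℝ) - 1)) • ∑ k ∈ Finset.range (m - 1), x ω (s : ℕ) (k + 1))
    (xhat : (Fin S → Fin m → Fin n) → EuclideanSpace ℝ (Fin d))
    (hout : ∀ ω,
      (favg (xt ω S) ≤ favg ((1 / S : ℝ) • ∑ s ∈ Finset.range S, xt ω (s + 1)) →
        xhat ω = xt ω S) ∧
      (¬ favg (xt ω S) ≤ favg ((1 / S : ℝ) • ∑ s ∈ Finset.range S, xt ω (s + 1)) →
        xhat ω = (1 / S : ℝ) • ∑ s ∈ Finset.range S, xt ω (s + 1))) :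
    (Fintype.card (Fin S → Fin m → Fin n) : ℝ)⁻¹ *
        ∑ ω : Fin S → Fin m → Fin n, (favg (xhat ω)) - favg xstar
      ≤ (2 * (m + 1) / ((γ - 4 * m + 2) * S)) * (favg xt0 - favg xstar)
        + (β * (β - 1) * L / (2 * (γ - 4 * m + 2) * S)) * ‖xt0 - xstar‖ ^ 2 := by
  -- basic positivity facts
  have hβ0 : (0:ℝ) < β := by linarith
  have hηpos : 0 < η := by rw [hη]; positivity
  have hmR : (2:ℝ) ≤ (m:ℝ) := by exact_mod_cast hm
  have hSR : (1:ℝ) ≤ (S:ℝ) := by exact_mod_cast hS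
  have hnR : (0:ℝ) < (n:ℝ) := by exact_mod_cast hn
  have hLβ : L * β ≠ 0 := by positivity
  set c₂ : ℝ := 2 * (β - 2) / (L * β ^ 2) with hc₂def
  set c₃ : ℝ := 4 / (L * β ^ 2) with hc₃def
  have hc₂val : c₂ = 2 * η - 4 * L * η ^ 2 := by
    rw [hc₂def, hη]; field_simp; ring
  have hc₃val : c₃ = 4 * L * η ^ 2 := by
    rw [hc₃def, hη]; field_simp
  have hc₂pos : 0 < c₂ := by
    rw [hc₂def]; apply div_pos (by linarith) (by positivity)
  have hc₃pos : 0 < c₃ := by rw [hc₃def]; positivity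
  have hFconv := aux_F_conv f favg hfavg hconv
  have hFdiff := aux_F_diff f favg hfavg hdiff
  have hFnonneg : ∀ z, 0 ≤ favg z - favg xstar := fun z => by linarith [hmin z]
  -- the sample space
  have hNpos : 0 < (Fintype.card (Fin S → Fin m → Fin n)) :=
    Fintype.card_pos_iff.mpr ⟨fun _ _ => ⟨0, hn⟩⟩
  have hNR : (0:ℝ) < (Fintype.card (Fin S → Fin m → Fin n) : ℝ) := by exact_mod_cast hNpos
  -- ======== agreement (measurability) lemma ========
  have key : ∀ s : ℕ, s ≤ S → ∀ ω ω' : (Fin S → Fin m → Fin n),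
      (∀ (s' : Fin S) (k' : Fin m), (s' : ℕ) < s → ω s' k' = ω' s' k') →
      xt ω s = xt ω' s ∧
      (∀ (hsS : s < S) (k : ℕ), k ≤ m →
        (∀ k' : Fin m, (k' : ℕ) < k → ω ⟨s, hsS⟩ k' = ω' ⟨s, hsS⟩ k') →
        x ω s k = x ω' s k) := by
    intro s
    induction s with
    | zero =>
      intro _ ω ω' hagree
      constructor
      · rw [hxt0, hxt0]
      · intro hsS k
        induction k with
        | zero => intro _ _; rw [hstart0, hstart0]
        | succ k ihk =>
          intro hk hagree2
          have hk' : k < m := hk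
          have hx : x ω 0 (k + 1) = x ω 0 k -
              η • (gradient (f (ω ⟨0, hsS⟩ ⟨k, hk'⟩)) (x ω 0 k)
                - gradient (f (ω ⟨0, hsS⟩ ⟨k, hk'⟩)) (xt ω 0) + gradient favg (xt ω 0)) :=
            hstep ω ⟨0, hsS⟩ ⟨k, hk'⟩
          have hx' : x ω' 0 (k + 1) = x ω' 0 k -
              η • (gradient (f (ω' ⟨0, hsS⟩ ⟨k, hk'⟩)) (x ω' 0 k)
                - gradient (f (ω' ⟨0, hsS⟩ ⟨k, hk'⟩)) (xt ω' 0) + gradient favg (xt ω' 0)) :=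
            hstep ω' ⟨0, hsS⟩ ⟨k, hk'⟩
          have hxk : x ω 0 k = x ω' 0 k :=
            ihk (by omega) (fun k' h => hagree2 k' (by omega))
          have hωk : ω ⟨0, hsS⟩ ⟨k, hk'⟩ = ω' ⟨0, hsS⟩ ⟨k, hk'⟩ :=
            hagree2 ⟨k, hk'⟩ (by simp)
          rw [hx, hx', hxk, hωk, hxt0, hxt0]
    | succ s ih =>
      intro hs1 ω ω' hagree
      have hsS : s < S := by omega
      have hprev := ih (by omega) ω ω' (fun s' k' h => hagree s' k' (by omega))
      have hxt1 : xt ω (s + 1) = xt ω' (s + 1) := by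
        have h1 : xt ω (s + 1) =
            (1 / ((m : ℝ) - 1)) • ∑ k ∈ Finset.range (m - 1), x ω s (k + 1) := hsnap ω ⟨s, hsS⟩
        have h2 : xt ω' (s + 1) =
            (1 / ((m : ℝ) - 1)) • ∑ k ∈ Finset.range (m - 1), x ω' s (k + 1) := hsnap ω' ⟨s, hsS⟩
        rw [h1, h2]
        congr 1
        refine Finset.sum_congr rfl (fun k hkmem => ?_)
        rw [Finset.mem_range] at hkmem
        exact hprev.2 hsS (k + 1) (by omega)
          (fun k' _ => hagree ⟨s, hsS⟩ k' (by exact Nat.lt_succ_self s))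
      refine ⟨hxt1, ?_⟩
      intro hsS1 k
      induction k with
      | zero =>
        intro _ _
        have h1 : x ω (s + 1) 0 = x ω s m := hstart ω s hsS1
        have h2 : x ω' (s + 1) 0 = x ω' s m := hstart ω' s hsS1
        rw [h1, h2]
        exact hprev.2 hsS m le_rfl (fun k' _ => hagree ⟨s, hsS⟩ k' (by exact Nat.lt_succ_self s))
      | succ k ihk =>
        intro hk hagree2
        have hk' : k < m := hk
        have hx : x ω (s + 1) (k + 1) = x ω (s + 1) k -
            η • (gradient (f (ω ⟨s + 1, hsS1⟩ ⟨k, hk'⟩)) (x ω (s + 1) k)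
              - gradient (f (ω ⟨s + 1, hsS1⟩ ⟨k, hk'⟩)) (xt ω (s + 1))
              + gradient favg (xt ω (s + 1))) := hstep ω ⟨s + 1, hsS1⟩ ⟨k, hk'⟩
        have hx' : x ω' (s + 1) (k + 1) = x ω' (s + 1) k -
            η • (gradient (f (ω' ⟨s + 1, hsS1⟩ ⟨k, hk'⟩)) (x ω' (s + 1) k)
              - gradient (f (ω' ⟨s + 1, hsS1⟩ ⟨k, hk'⟩)) (xt ω' (s + 1))
              + gradient favg (xt ω' (s + 1))) := hstep ω' ⟨s + 1, hsS1⟩ ⟨k, hk'⟩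
        have hxk : x ω (s + 1) k = x ω' (s + 1) k :=
          ihk (by omega) (fun k' h => hagree2 k' (by omega))
        have hωk : ω ⟨s + 1, hsS1⟩ ⟨k, hk'⟩ = ω' ⟨s + 1, hsS1⟩ ⟨k, hk'⟩ :=
          hagree2 ⟨k, hk'⟩ (by simp)
        rw [hx, hx', hxk, hωk, hxt1]
  -- ======== one-coordinate update facts ========
  have hupd : ∀ (ω : Fin S → Fin m → Fin n) (σ : Fin S) (κ : Fin m) (j : Fin n),
      x (Function.update ω σ (Function.update (ω σ) κ j)) σ κ = x ω σ κ
      ∧ xt (Function.update ω σ (Function.update (ω σ) κ j)) σ = xt ω σ := by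
    intro ω σ κ j
    set ω' := Function.update ω σ (Function.update (ω σ) κ j) with hω'
    have hagree : ∀ (s' : Fin S) (k' : Fin m), (s' : ℕ) < (σ : ℕ) → ω' s' k' = ω s' k' := by
      intro s' k' h
      have hne : s' ≠ σ := ne_of_lt (Fin.lt_def.mpr h)
      rw [hω', Function.update_of_ne hne]
    have hk := key σ (le_of_lt σ.isLt) ω' ω hagree
    constructor
    · refine hk.2 σ.isLt κ (le_of_lt κ.isLt) (fun k' hk' => ?_)
      have hne : k' ≠ κ := ne_of_lt (Fin.lt_def.mpr hk')
      show ω' σ k' = ω σ k'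
      rw [hω', Function.update_self, Function.update_of_ne hne]
    · exact hk.1
  -- ======== expected one-step inequality ========
  have hstepexp : ∀ (σ : Fin S) (κ : Fin m),
      (∑ ω : Fin S → Fin m → Fin n, ‖x ω σ ((κ : ℕ) + 1) - xstar‖ ^ 2)
        ≤ (∑ ω : Fin S → Fin m → Fin n, ‖x ω σ κ - xstar‖ ^ 2)
          - c₂ * (∑ ω : Fin S → Fin m → Fin n, (favg (x ω σ κ) - favg xstar))
          + c₃ * (∑ ω : Fin S → Fin m → Fin n, (favg (xt ω σ) - favg xstar)) := by
    intro σ κ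
    have hkey := aux_sum_update (fun ω => ‖x ω σ ((κ : ℕ) + 1) - xstar‖ ^ 2) σ κ
    have hpoint : ∀ ω : Fin S → Fin m → Fin n, ∑ j : Fin n,
        ‖x (Function.update ω σ (Function.update (ω σ) κ j)) σ ((κ : ℕ) + 1) - xstar‖ ^ 2
        ≤ n * (‖x ω σ κ - xstar‖ ^ 2 - c₂ * (favg (x ω σ κ) - favg xstar)
            + c₃ * (favg (xt ω σ) - favg xstar)) := by
      intro ω
      have hxj : ∀ j : Fin n,
          x (Function.update ω σ (Function.update (ω σ) κ j)) σ ((κ : ℕ) + 1)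
          = x ω σ κ - η • (gradient (f j) (x ω σ κ) - gradient (f j) (xt ω σ)
              + gradient favg (xt ω σ)) := by
        intro j
        set ω' := Function.update ω σ (Function.update (ω σ) κ j) with hω'
        have h1 : x ω' σ ((κ : ℕ) + 1) = x ω' σ κ - η • (gradient (f (ω' σ κ)) (x ω' σ κ)
            - gradient (f (ω' σ κ)) (xt ω' σ) + gradient favg (xt ω' σ)) := hstep ω' σ κ
        have h2 : ω' σ κ = j := by rw [hω']; simp
        rw [h1, h2, (hupd ω σ κ j).1, (hupd ω σ κ j).2]
      calc ∑ j : Fin n,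
          ‖x (Function.update ω σ (Function.update (ω σ) κ j)) σ ((κ : ℕ) + 1) - xstar‖ ^ 2
          = ∑ j : Fin n, ‖x ω σ κ - η • (gradient (f j) (x ω σ κ) - gradient (f j) (xt ω σ)
              + gradient favg (xt ω σ)) - xstar‖ ^ 2 :=
            Finset.sum_congr rfl (fun j _ => by rw [hxj j])
        _ ≤ n * (‖x ω σ κ - xstar‖ ^ 2 - c₂ * (favg (x ω σ κ) - favg xstar)
            + c₃ * (favg (xt ω σ) - favg xstar)) := by
            rw [hc₂val, hc₃val]
            exact aux_step hn f favg hfavg hconv hdiff L hL hlip xstar hmin η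
              (le_of_lt hηpos) (x ω σ κ) (xt ω σ)
    have h3 : (n : ℝ) * (∑ ω : Fin S → Fin m → Fin n, ‖x ω σ ((κ : ℕ) + 1) - xstar‖ ^ 2)
        ≤ (n : ℝ) * ((∑ ω : Fin S → Fin m → Fin n, ‖x ω σ κ - xstar‖ ^ 2)
          - c₂ * (∑ ω : Fin S → Fin m → Fin n, (favg (x ω σ κ) - favg xstar))
          + c₃ * (∑ ω : Fin S → Fin m → Fin n, (favg (xt ω σ) - favg xstar))) := by
      rw [hkey]
      calc (∑ ω : Fin S → Fin m → Fin n, ∑ j : Fin n,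
            ‖x (Function.update ω σ (Function.update (ω σ) κ j)) σ ((κ : ℕ) + 1) - xstar‖ ^ 2)
          ≤ ∑ ω : Fin S → Fin m → Fin n,
              (n : ℝ) * (‖x ω σ κ - xstar‖ ^ 2 - c₂ * (favg (x ω σ κ) - favg xstar)
                + c₃ * (favg (xt ω σ) - favg xstar)) :=
            Finset.sum_le_sum (fun ω _ => hpoint ω)
        _ = (n : ℝ) * ((∑ ω : Fin S → Fin m → Fin n, ‖x ω σ κ - xstar‖ ^ 2)
            - c₂ * (∑ ω : Fin S → Fin m → Fin n, (favg (x ω σ κ) - favg xstar))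
            + c₃ * (∑ ω : Fin S → Fin m → Fin n, (favg (xt ω σ) - favg xstar))) := by
            rw [← Finset.mul_sum]
            congr 1
            rw [Finset.sum_add_distrib, Finset.sum_sub_distrib, Finset.mul_sum, Finset.mul_sum]
    exact le_of_mul_le_mul_left h3 hnR
  have hm1R : (0:ℝ) < (m:ℝ) - 1 := by linarith
  have hcastm : ((m - 1 : ℕ) : ℝ) = (m : ℝ) - 1 := by
    have : (1:ℕ) ≤ m := by omega
    push_cast [this]
    ring
  -- ======== snapshot Jensen step ========
  have hsnapexp : ∀ σ : Fin S,
      ((m : ℝ) - 1) * (∑ ω : Fin S → Fin m → Fin n, (favg (xt ω ((σ : ℕ) + 1)) - favg xstar))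
      ≤ ∑ k ∈ Finset.range m, ∑ ω : Fin S → Fin m → Fin n,
          (favg (x ω σ k) - favg xstar) := by
    intro σ
    have hpt : ∀ ω : Fin S → Fin m → Fin n,
        ((m : ℝ) - 1) * (favg (xt ω ((σ : ℕ) + 1)) - favg xstar)
        ≤ ∑ k ∈ Finset.range m, (favg (x ω σ k) - favg xstar) := by
      intro ω
      have hsnapω : xt ω ((σ : ℕ) + 1)
          = (1 / ((m : ℝ) - 1)) • ∑ k ∈ Finset.range (m - 1), x ω σ (k + 1) := hsnap ω σ
      have hjensen : favg (xt ω ((σ : ℕ) + 1))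
          ≤ ∑ k ∈ Finset.range (m - 1), (1 / ((m : ℝ) - 1)) * favg (x ω σ (k + 1)) := by
        rw [hsnapω, Finset.smul_sum]
        have := hFconv.map_sum_le (t := Finset.range (m - 1))
          (w := fun _ => (1 / ((m : ℝ) - 1))) (p := fun k => x ω σ (k + 1))
          (fun i _ => by positivity)
          (by rw [Finset.sum_const, Finset.card_range, nsmul_eq_mul, hcastm]; field_simp)
          (fun i _ => Set.mem_univ _)
        simpa [smul_eq_mul] using this
      have h2 : ((m : ℝ) - 1) * favg (xt ω ((σ : ℕ) + 1))
          ≤ ∑ k ∈ Finset.range (m - 1), favg (x ω σ (k + 1)) := by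
        have h2a := mul_le_mul_of_nonneg_left hjensen (le_of_lt hm1R)
        calc ((m : ℝ) - 1) * favg (xt ω ((σ : ℕ) + 1))
            ≤ ((m : ℝ) - 1) * ∑ k ∈ Finset.range (m - 1),
                (1 / ((m : ℝ) - 1)) * favg (x ω σ (k + 1)) := h2a
          _ = ∑ k ∈ Finset.range (m - 1), favg (x ω σ (k + 1)) := by
              rw [Finset.mul_sum]
              refine Finset.sum_congr rfl (fun k _ => ?_)
              field_simp
      have h3 : ∑ k ∈ Finset.range m, (favg (x ω σ k) - favg xstar)
          = (∑ k ∈ Finset.range (m - 1), (favg (x ω σ (k + 1)) - favg xstar))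
            + (favg (x ω σ 0) - favg xstar) := by
        have hmm : m = (m - 1) + 1 := by omega
        conv_lhs => rw [hmm]
        rw [Finset.sum_range_succ']
      have h4 : ∑ k ∈ Finset.range (m - 1), (favg (x ω σ (k + 1)) - favg xstar)
          = (∑ k ∈ Finset.range (m - 1), favg (x ω σ (k + 1))) - ((m : ℝ) - 1) * favg xstar := by
        rw [Finset.sum_sub_distrib, Finset.sum_const, Finset.card_range, nsmul_eq_mul, hcastm]
      have h5 := hFnonneg (x ω σ 0)
      rw [h3, h4]
      nlinarith [h2]
    calc ((m : ℝ) - 1) * ∑ ω : Fin S → Fin m → Fin n, (favg (xt ω ((σ : ℕ) + 1)) - favg xstar)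
        = ∑ ω : Fin S → Fin m → Fin n,
            ((m : ℝ) - 1) * (favg (xt ω ((σ : ℕ) + 1)) - favg xstar) := Finset.mul_sum _ _ _
      _ ≤ ∑ ω : Fin S → Fin m → Fin n, ∑ k ∈ Finset.range m, (favg (x ω σ k) - favg xstar) :=
          Finset.sum_le_sum (fun ω _ => hpt ω)
      _ = ∑ k ∈ Finset.range m, ∑ ω : Fin S → Fin m → Fin n, (favg (x ω σ k) - favg xstar) :=
          Finset.sum_comm
  -- ======== apply the abstract rate lemma ========
  have hrates := aux_rates S m hm hS c₂ c₃ (le_of_lt hc₂pos) (le_of_lt hc₃pos)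
    (fun s k => ∑ ω : Fin S → Fin m → Fin n, ‖x ω s k - xstar‖ ^ 2)
    (fun s k => ∑ ω : Fin S → Fin m → Fin n, (favg (x ω s k) - favg xstar))
    (fun s => ∑ ω : Fin S → Fin m → Fin n, (favg (xt ω s) - favg xstar))
    (fun s hs k hk => hstepexp ⟨s, hs⟩ ⟨k, hk⟩)
    (fun s hs => hsnapexp ⟨s, hs⟩)
    (fun s hs1 => Finset.sum_congr rfl (fun ω _ => by rw [hstart ω s hs1]))
    (fun s k => Finset.sum_nonneg (fun ω _ => by positivity))
    (fun s k => Finset.sum_nonneg (fun ω _ => hFnonneg _))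
    (fun s => Finset.sum_nonneg (fun ω _ => hFnonneg _))
  set NR : ℝ := (Fintype.card (Fin S → Fin m → Fin n) : ℝ) with hNRdef
  set R0 : ℝ := ‖xt0 - xstar‖ ^ 2 with hR0def
  set D0 : ℝ := favg xt0 - favg xstar with hD0def
  set T : ℝ := ∑ s ∈ Finset.range S,
      ∑ ω : Fin S → Fin m → Fin n, (favg (xt ω (s + 1)) - favg xstar) with hTdef
  have hA00 : ∑ ω : Fin S → Fin m → Fin n, ‖x ω 0 0 - xstar‖ ^ 2 = NR * R0 := by
    rw [Finset.sum_congr rfl (fun ω _ => by rw [hstart0 ω])]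
    rw [Finset.sum_const, Finset.card_univ, nsmul_eq_mul, hNRdef, hR0def]
  have hDt0 : ∑ ω : Fin S → Fin m → Fin n, (favg (xt ω 0) - favg xstar) = NR * D0 := by
    rw [Finset.sum_congr rfl (fun ω _ => by rw [hxt0 ω])]
    rw [Finset.sum_const, Finset.card_univ, nsmul_eq_mul, hNRdef, hD0def]
  rw [hA00, hDt0] at hrates
  -- hrates : (c₂ * ((m:ℝ) - 1) - m * c₃) * T ≤ NR * R0 + m * c₃ * (NR * D0)
  have hT0 : 0 ≤ T := by
    rw [hTdef]
    exact Finset.sum_nonneg (fun s _ => Finset.sum_nonneg (fun ω _ => hFnonneg _))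
  -- ======== output step ========
  have hhat : ∀ ω : Fin S → Fin m → Fin n, favg (xhat ω) - favg xstar
      ≤ (1 / (S : ℝ)) * ∑ s ∈ Finset.range S, (favg (xt ω (s + 1)) - favg xstar) := by
    intro ω
    have havg : favg ((1 / S : ℝ) • ∑ s ∈ Finset.range S, xt ω (s + 1))
        ≤ ∑ s ∈ Finset.range S, (1 / (S : ℝ)) * favg (xt ω (s + 1)) := by
      rw [Finset.smul_sum]
      have := hFconv.map_sum_le (t := Finset.range S)
        (w := fun _ => (1 / (S : ℝ))) (p := fun s => xt ω (s + 1))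
        (fun i _ => by positivity)
        (by rw [Finset.sum_const, Finset.card_range, nsmul_eq_mul]; field_simp)
        (fun i _ => Set.mem_univ _)
      simpa [smul_eq_mul] using this
    have hcase : favg (xhat ω) ≤ favg ((1 / S : ℝ) • ∑ s ∈ Finset.range S, xt ω (s + 1)) := by
      by_cases hc : favg (xt ω S) ≤ favg ((1 / S : ℝ) • ∑ s ∈ Finset.range S, xt ω (s + 1))
      · rw [(hout ω).1 hc]; exact hc
      · rw [(hout ω).2 hc]
    have hsplit : ∑ s ∈ Finset.range S, (favg (xt ω (s + 1)) - favg xstar)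
        = (∑ s ∈ Finset.range S, favg (xt ω (s + 1))) - (S : ℝ) * favg xstar := by
      rw [Finset.sum_sub_distrib, Finset.sum_const, Finset.card_range, nsmul_eq_mul]
    rw [hsplit, mul_sub]
    have hSne : (S : ℝ) ≠ 0 := by positivity
    have : (1 / (S : ℝ)) * ((S : ℝ) * favg xstar) = favg xstar := by field_simp
    rw [this]
    have h6 : favg (xhat ω) ≤ (1 / (S : ℝ)) * ∑ s ∈ Finset.range S, favg (xt ω (s + 1)) := by
      calc favg (xhat ω) ≤ favg ((1 / S : ℝ) • ∑ s ∈ Finset.range S, xt ω (s + 1)) := hcase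
        _ ≤ ∑ s ∈ Finset.range S, (1 / (S : ℝ)) * favg (xt ω (s + 1)) := havg
        _ = (1 / (S : ℝ)) * ∑ s ∈ Finset.range S, favg (xt ω (s + 1)) :=
            (Finset.mul_sum _ _ _).symm
    linarith
  have hhatsum : ∑ ω : Fin S → Fin m → Fin n, (favg (xhat ω) - favg xstar)
      ≤ (1 / (S : ℝ)) * T := by
    calc ∑ ω : Fin S → Fin m → Fin n, (favg (xhat ω) - favg xstar)
        ≤ ∑ ω : Fin S → Fin m → Fin n, (1 / (S : ℝ)) *
            ∑ s ∈ Finset.range S, (favg (xt ω (s + 1)) - favg xstar) :=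
          Finset.sum_le_sum (fun ω _ => hhat ω)
      _ = (1 / (S : ℝ)) * ∑ ω : Fin S → Fin m → Fin n,
            ∑ s ∈ Finset.range S, (favg (xt ω (s + 1)) - favg xstar) :=
          (Finset.mul_sum _ _ _).symm
      _ = (1 / (S : ℝ)) * T := by rw [hTdef, Finset.sum_comm]
  -- ======== final arithmetic ========
  have hc4pos : (0:ℝ) < γ - 3 * m + 1 := by linarith
  have hgap : (0:ℝ) < γ - 4 * m + 2 := hγpos
  have hden : c₂ * ((m : ℝ) - 1) - m * c₃ = 2 * (γ - 3 * m + 1) / (L * β ^ 2) := by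
    rw [hc₂def, hc₃def, hγ]
    field_simp
    ring
  rw [hden] at hrates
  -- rewrite goal
  have hgoal1 : NR⁻¹ * (∑ ω : Fin S → Fin m → Fin n, favg (xhat ω)) - favg xstar
      = NR⁻¹ * ∑ ω : Fin S → Fin m → Fin n, (favg (xhat ω) - favg xstar) := by
    rw [Finset.sum_sub_distrib, Finset.sum_const, Finset.card_univ, nsmul_eq_mul, ← hNRdef]
    have hNne : NR ≠ 0 := ne_of_gt hNR
    have h7 : NR⁻¹ * (NR * favg xstar) = favg xstar := by
      rw [← mul_assoc, inv_mul_cancel₀ hNne, one_mul]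
    rw [mul_sub, h7]
  show NR⁻¹ * (∑ ω : Fin S → Fin m → Fin n, favg (xhat ω)) - favg xstar
      ≤ 2 * (↑m + 1) / ((γ - 4 * ↑m + 2) * ↑S) * D0
        + β * (β - 1) * L / (2 * (γ - 4 * ↑m + 2) * ↑S) * R0
  rw [hgoal1]
  have hstep1 : NR⁻¹ * ∑ ω : Fin S → Fin m → Fin n, (favg (xhat ω) - favg xstar)
      ≤ NR⁻¹ * ((1 / (S : ℝ)) * T) :=
    mul_le_mul_of_nonneg_left hhatsum (by positivity)
  have hT2 : T ≤ (L * β ^ 2 / (2 * (γ - 3 * m + 1))) * (NR * R0 + (m : ℝ) * c₃ * (NR * D0)) := by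
    have hcpos : (0:ℝ) < 2 * (γ - 3 * m + 1) / (L * β ^ 2) := by positivity
    have hT2' : T ≤ (NR * R0 + ↑m * c₃ * (NR * D0)) / (2 * (γ - 3 * m + 1) / (L * β ^ 2)) := by
      rw [le_div_iff₀ hcpos, mul_comm]
      exact hrates
    have heq : (NR * R0 + ↑m * c₃ * (NR * D0)) / (2 * (γ - 3 * m + 1) / (L * β ^ 2))
        = (L * β ^ 2 / (2 * (γ - 3 * m + 1))) * (NR * R0 + (m : ℝ) * c₃ * (NR * D0)) := by
      rw [div_div_eq_mul_div, mul_comm_div]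
      rw [div_eq_mul_inv, div_eq_mul_inv]
      ring
    rw [heq] at hT2'
    exact hT2'
  have hNne : NR ≠ 0 := ne_of_gt hNR
  have hc4ne : (γ - 3 * (m:ℝ) + 1) ≠ 0 := ne_of_gt hc4pos
  have hLβne : (L * β ^ 2) ≠ 0 := by positivity
  have hinner : (L * β ^ 2 / (2 * (γ - 3 * ↑m + 1))) * (R0 + (m : ℝ) * c₃ * D0)
      = (L * β ^ 2 / (2 * (γ - 3 * ↑m + 1))) * R0 + (2 * (m:ℝ) / (γ - 3 * ↑m + 1)) * D0 := by
    rw [hc₃def]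
    field_simp
    ring
  have hC : (L * β ^ 2 / (2 * (γ - 3 * ↑m + 1))) * (NR * R0 + (m : ℝ) * c₃ * (NR * D0))
      = NR * ((L * β ^ 2 / (2 * (γ - 3 * ↑m + 1))) * R0
          + (2 * (m:ℝ) / (γ - 3 * ↑m + 1)) * D0) := by
    calc (L * β ^ 2 / (2 * (γ - 3 * ↑m + 1))) * (NR * R0 + (m : ℝ) * c₃ * (NR * D0))
        = NR * ((L * β ^ 2 / (2 * (γ - 3 * ↑m + 1))) * (R0 + (m : ℝ) * c₃ * D0)) := by ring
      _ = NR * ((L * β ^ 2 / (2 * (γ - 3 * ↑m + 1))) * R0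
          + (2 * (m:ℝ) / (γ - 3 * ↑m + 1)) * D0) := by rw [hinner]
  have hQ : NR⁻¹ * ((1 / (S : ℝ)) * T)
      ≤ (1 / (S : ℝ)) * ((L * β ^ 2 / (2 * (γ - 3 * ↑m + 1))) * R0
          + (2 * (m:ℝ) / (γ - 3 * ↑m + 1)) * D0) := by
    have h10 := mul_le_mul_of_nonneg_left hT2
      (show (0:ℝ) ≤ NR⁻¹ * (1 / (S : ℝ)) by positivity)
    calc NR⁻¹ * ((1 / (S : ℝ)) * T) = NR⁻¹ * (1 / (S : ℝ)) * T := by ring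
      _ ≤ NR⁻¹ * (1 / (S : ℝ)) *
          ((L * β ^ 2 / (2 * (γ - 3 * ↑m + 1))) * (NR * R0 + (m : ℝ) * c₃ * (NR * D0))) := h10
      _ = (NR⁻¹ * NR) * ((1 / (S : ℝ)) * ((L * β ^ 2 / (2 * (γ - 3 * ↑m + 1))) * R0
          + (2 * (m:ℝ) / (γ - 3 * ↑m + 1)) * D0)) := by rw [hC]; ring
      _ = (1 / (S : ℝ)) * ((L * β ^ 2 / (2 * (γ - 3 * ↑m + 1))) * R0
          + (2 * (m:ℝ) / (γ - 3 * ↑m + 1)) * D0) := by rw [inv_mul_cancel₀ hNne, one_mul]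
  have hcoefA : L * β ^ 2 / (2 * (γ - 3 * ↑m + 1)) ≤ β * (β - 1) * L / (2 * (γ - 4 * ↑m + 2)) := by
    rw [div_le_div_iff₀ (by positivity) (by positivity), hγ]
    nlinarith [mul_nonneg (mul_nonneg hL.le hβ0.le) (show (0:ℝ) ≤ 4 * (m:ℝ) - 2 by linarith)]
  have hcoefB : 2 * (m:ℝ) / (γ - 3 * ↑m + 1) ≤ 2 * ((m:ℝ) + 1) / (γ - 4 * ↑m + 2) := by
    rw [div_le_div_iff₀ hc4pos hγpos]
    nlinarith [sq_nonneg ((m:ℝ) - 1), hγpos]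
  have hR0nn : 0 ≤ R0 := by rw [hR0def]; positivity
  have hD0nn : 0 ≤ D0 := hFnonneg xt0
  calc NR⁻¹ * ∑ ω : Fin S → Fin m → Fin n, (favg (xhat ω) - favg xstar)
      ≤ NR⁻¹ * ((1 / (S : ℝ)) * T) := hstep1
    _ ≤ (1 / (S : ℝ)) * ((L * β ^ 2 / (2 * (γ - 3 * ↑m + 1))) * R0
        + (2 * (m:ℝ) / (γ - 3 * ↑m + 1)) * D0) := hQ
    _ ≤ (1 / (S : ℝ)) * ((β * (β - 1) * L / (2 * (γ - 4 * ↑m + 2))) * R0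
        + (2 * ((m:ℝ) + 1) / (γ - 4 * ↑m + 2)) * D0) := by
        apply mul_le_mul_of_nonneg_left _ (by positivity)
        exact add_le_add (mul_le_mul_of_nonneg_right hcoefA hR0nn)
          (mul_le_mul_of_nonneg_right hcoefB hD0nn)
    _ = 2 * (↑m + 1) / ((γ - 4 * ↑m + 2) * ↑S) * D0
        + β * (β - 1) * L / (2 * (γ - 4 * ↑m + 2) * ↑S) * R0 := by
        have hgapne : (γ - 4 * (m:ℝ) + 2) ≠ 0 := ne_of_gt hγpos
        have hSne : ((S:ℝ)) ≠ 0 := by positivity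
        field_simp
        ring
end

section
/- Sublinear convergence of VR-SGD (Option I, non-smooth composite, non-strongly convex): Under the per-epoch bound for the composite objective F = f + g with Option I (snapshot equal to the full epoch average and starting point equal to the last iterate), the output x̂^S satisfies E[F(x̂^S)] − F(x*) ≤ (2(m+1)/((β−5) m S)) (F(x̃^0) − F(x*)) + (β(β−1)L/(2(β−5) m S)) ‖x̃^0 − x*‖², provided β > 5. -/
open scoped BigOperators RealInnerProductSpace

set_option linter.unusedSectionVars false
set_option linter.unusedVariables false
set_option maxHeartbeats 2000000



section Helpers

variable {E : Type*} [NormedAddCommGroup E] [InnerProductSpace ℝ E] [CompleteSpace E]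

lemma vr_eps_le {c K : ℝ} (hK : 0 ≤ K) (h : ∀ t : ℝ, 0 < t → t ≤ 1 → c ≤ t * K) : c ≤ 0 := by
  by_contra hc
  push_neg at hc
  have ht0 : 0 < min 1 (c / (2 * (K + 1))) := by
    apply lt_min one_pos
    positivity
  have := h _ ht0 (min_le_left _ _)
  have h2 : min 1 (c / (2 * (K + 1))) * K ≤ (c / (2 * (K + 1))) * K :=
    mul_le_mul_of_nonneg_right (min_le_right _ _) hK
  have h3 : (c / (2 * (K + 1))) * K < c := by
    rw [div_mul_eq_mul_div, div_lt_iff₀ (by positivity)]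
    nlinarith
  linarith

lemma vr_hasDerivAt_line (h : E → ℝ) (hd : Differentiable ℝ h) (x u : E) (t : ℝ) :
    HasDerivAt (fun t : ℝ => h (x + t • u)) ⟪gradient h (x + t • u), u⟫ t := by
  have h1 : HasFDerivAt h (InnerProductSpace.toDual ℝ E (gradient h (x + t • u))) (x + t • u) :=
    (hd (x + t • u)).hasGradientAt.hasFDerivAt
  have h2 : HasDerivAt (fun s : ℝ => x + s • u) u t := by
    simpa using ((hasDerivAt_id t).smul_const u).const_add x
  have := h1.comp_hasDerivAt t h2
  exact this

lemma vr_convex_inner_le (h : E → ℝ) (hc : ConvexOn ℝ Set.univ h) (hd : Differentiable ℝ h)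
    (x y : E) : h x + ⟪gradient h x, y - x⟫ ≤ h y := by
  set u := y - x with hu
  set φ : ℝ → ℝ := fun t => h (x + t • u) with hφ
  have hφconv : ConvexOn ℝ Set.univ φ := by
    have := hc.comp_affineMap (AffineMap.lineMap x y : ℝ →ᵃ[ℝ] E)
    have heq : φ = h ∘ (AffineMap.lineMap x y : ℝ →ᵃ[ℝ] E) := by
      funext t
      simp [hφ, AffineMap.lineMap_apply, hu, add_comm]
    rw [heq]
    simpa using this
  have hder : HasDerivAt φ ⟪gradient h (x + (0:ℝ) • u), u⟫ 0 := vr_hasDerivAt_line h hd x u 0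
  have hder' : HasDerivAt φ ⟪gradient h x, u⟫ 0 := by simpa using hder
  have hslope := hφconv.deriv_le_slope (Set.mem_univ 0) (Set.mem_univ 1) one_pos
    hder'.differentiableAt
  rw [hder'.deriv] at hslope
  have hsl : slope φ 0 1 = φ 1 - φ 0 := by simp [slope_def_field]
  rw [hsl] at hslope
  have h1 : φ 1 = h y := by simp [hφ, hu]
  have h0 : φ 0 = h x := by simp [hφ]
  rw [h1, h0] at hslope
  linarith

lemma vr_descent (h : E → ℝ) (hd : Differentiable ℝ h) (L : ℝ) (hL : 0 < L)
    (hlip : ∀ a b, ‖gradient h a - gradient h b‖ ≤ L * ‖a - b‖) (x y : E) :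
    h y ≤ h x + ⟪gradient h x, y - x⟫ + L / 2 * ‖y - x‖ ^ 2 := by
  set u := y - x with hu
  set C : ℝ := ⟪gradient h x, u⟫ with hC
  set D : ℝ := L / 2 * ‖u‖ ^ 2 with hD
  set ψ : ℝ → ℝ := fun t => h (x + t • u) - t * C - t ^ 2 * D with hψ
  have hψder : ∀ t : ℝ, HasDerivAt ψ (⟪gradient h (x + t • u), u⟫ - C - 2 * t * D) t := by
    intro t
    have h1 := vr_hasDerivAt_line h hd x u t
    have h2 : HasDerivAt (fun t : ℝ => t * C) C t := hasDerivAt_mul_const C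
    have h3 : HasDerivAt (fun t : ℝ => t ^ 2 * D) (2 * t * D) t := by
      have := (hasDerivAt_pow 2 t).mul_const D
      simpa [mul_comm, mul_assoc, mul_left_comm] using this
    exact (h1.sub h2).sub h3
  have hmono : AntitoneOn ψ (Set.Icc 0 1) := by
    apply antitoneOn_of_deriv_nonpos (convex_Icc 0 1)
    · exact Continuous.continuousOn (by
        have : ∀ t : ℝ, DifferentiableAt ℝ ψ t := fun t => (hψder t).differentiableAt
        exact (Differentiable.continuous this))
    · intro t _
      exact (hψder t).differentiableAt.differentiableWithinAt
    · intro t ht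
      rw [interior_Icc] at ht
      rw [(hψder t).deriv]
      have hib : ⟪gradient h (x + t • u) - gradient h x, u⟫ ≤ L * t * ‖u‖ ^ 2 := by
        calc ⟪gradient h (x + t • u) - gradient h x, u⟫
            ≤ ‖gradient h (x + t • u) - gradient h x‖ * ‖u‖ := real_inner_le_norm _ _
          _ ≤ (L * ‖(x + t • u) - x‖) * ‖u‖ := by
              apply mul_le_mul_of_nonneg_right (hlip _ _) (norm_nonneg _)
          _ = L * t * ‖u‖ ^ 2 := by
              rw [add_sub_cancel_left, norm_smul, Real.norm_eq_abs, abs_of_pos ht.1]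
              ring
      have hsplit : ⟪gradient h (x + t • u), u⟫ - C =
          ⟪gradient h (x + t • u) - gradient h x, u⟫ := by
        rw [inner_sub_left, hC]
      have hDe : 2 * t * D = L * t * ‖u‖ ^ 2 := by rw [hD]; ring
      linarith [hib, hsplit, hDe]
  have := hmono (Set.mem_Icc.2 ⟨le_refl 0, zero_le_one⟩) (Set.mem_Icc.2 ⟨zero_le_one, le_refl 1⟩)
    zero_le_one
  have hψ1 : ψ 1 = h y - C - D := by simp [hψ, hu]
  have hψ0 : ψ 0 = h x := by simp [hψ]
  rw [hψ1, hψ0] at this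
  simp only [hC, hD, hu] at this
  linarith

lemma vr_cocoercive (h : E → ℝ) (hc : ConvexOn ℝ Set.univ h) (hd : Differentiable ℝ h)
    (L : ℝ) (hL : 0 < L) (hlip : ∀ a b, ‖gradient h a - gradient h b‖ ≤ L * ‖a - b‖) (a b : E) :
    ‖gradient h a - gradient h b‖ ^ 2 ≤ 2 * L * (h a - h b - ⟪gradient h b, a - b⟫) := by
  set c : E := gradient h b with hc'
  set φ : E → ℝ := fun w => h w - ⟪c, w⟫ with hφ
  have hφgrad : ∀ w, HasGradientAt φ (gradient h w - c) w := by
    intro w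
    have h1 : HasFDerivAt h (InnerProductSpace.toDual ℝ E (gradient h w)) w :=
      (hd w).hasGradientAt.hasFDerivAt
    have h2 : HasFDerivAt (fun w : E => ⟪c, w⟫) (InnerProductSpace.toDual ℝ E c) w :=
      (InnerProductSpace.toDual ℝ E c).hasFDerivAt
    have h3 := h1.sub h2
    rw [← map_sub] at h3
    have h4 := h3.hasGradientAt
    rwa [LinearIsometryEquiv.symm_apply_apply] at h4
  have hφgradeq : ∀ w, gradient φ w = gradient h w - c := fun w => (hφgrad w).gradient
  have hφdiff : Differentiable ℝ φ := fun w => (hφgrad w).hasFDerivAt.differentiableAt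
  have hφconv : ConvexOn ℝ Set.univ φ := by
    apply hc.add
    constructor
    · exact convex_univ
    · intro p _ q _ s t hs ht hst
      simp only [inner_add_right, real_inner_smul_right]
      apply le_of_eq
      ring_nf
  have hφlip : ∀ p q, ‖gradient φ p - gradient φ q‖ ≤ L * ‖p - q‖ := by
    intro p q
    rw [hφgradeq, hφgradeq, sub_sub_sub_cancel_right]
    exact hlip p q
  -- b is a global minimizer of φ
  have hmin : ∀ w, φ b ≤ φ w := by
    intro w
    have := vr_convex_inner_le φ hφconv hφdiff b w
    rw [hφgradeq] at this
    have h0 : gradient h b - c = 0 := by rw [hc', sub_self]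
    rw [h0, inner_zero_left, add_zero] at this
    exact this
  -- descent step
  set G : E := gradient h a - c with hG
  have hdesc := vr_descent φ hφdiff L hL hφlip a (a - L⁻¹ • G)
  rw [hφgradeq] at hdesc
  have e1 : a - L⁻¹ • G - a = -(L⁻¹ • G) := by abel
  have e2 : ⟪gradient h a - c, a - L⁻¹ • G - a⟫ = -(L⁻¹ * ‖G‖ ^ 2) := by
    rw [e1, inner_neg_right, real_inner_smul_right, ← hG, real_inner_self_eq_norm_sq]
  have e3 : ‖a - L⁻¹ • G - a‖ ^ 2 = L⁻¹ ^ 2 * ‖G‖ ^ 2 := by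
    rw [e1, norm_neg, norm_smul, Real.norm_eq_abs, abs_of_pos (by positivity), mul_pow]
  rw [e2, e3] at hdesc
  have hkey : φ b ≤ φ a - 1 / (2 * L) * ‖G‖ ^ 2 := by
    have := hmin (a - L⁻¹ • G)
    have harith : φ a + -(L⁻¹ * ‖G‖ ^ 2) + L / 2 * (L⁻¹ ^ 2 * ‖G‖ ^ 2)
        = φ a - 1 / (2 * L) * ‖G‖ ^ 2 := by
      field_simp
      ring
    linarith [harith ▸ hdesc]
  have hφab : φ a - φ b = h a - h b - ⟪c, a - b⟫ := by
    simp only [hφ, inner_sub_right]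
    ring
  have hL' : (0:ℝ) < 2 * L := by linarith
  rw [← hφab]
  have : 1 / (2 * L) * ‖G‖ ^ 2 ≤ φ a - φ b := by linarith
  calc ‖G‖ ^ 2 = 2 * L * (1 / (2 * L) * ‖G‖ ^ 2) := by field_simp
    _ ≤ 2 * L * (φ a - φ b) := by apply mul_le_mul_of_nonneg_left this (by linarith)

end Helpers

section TP
variable {E : Type*} [NormedAddCommGroup E] [InnerProductSpace ℝ E] [CompleteSpace E]

lemma vr_three_point (g : E → ℝ) (hg : ConvexOn ℝ Set.univ g) (q : ℝ) (hq : 0 < q)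
    (v x xp : E)
    (hstep : ∀ y, g xp + ⟪v, xp⟫ + q * ‖xp - x‖ ^ 2 ≤ g y + ⟪v, y⟫ + q * ‖y - x‖ ^ 2)
    (y : E) :
    g xp + ⟪v, xp - y⟫ ≤ g y + q * (‖y - x‖ ^ 2 - ‖y - xp‖ ^ 2 - ‖xp - x‖ ^ 2) := by
  set w : E := y - xp with hw
  have hc : g xp - g y - ⟪v, w⟫ - 2 * q * ⟪xp - x, w⟫ ≤ 0 := by
    apply vr_eps_le (K := q * ‖w‖ ^ 2) (by positivity)
    intro t ht0 ht1
    have hyt : xp + t • w = (1 - t) • xp + t • y := by rw [hw]; module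
    have hconv : g (xp + t • w) ≤ (1 - t) * g xp + t * g y := by
      rw [hyt]
      have := hg.2 (Set.mem_univ xp) (Set.mem_univ y) (by linarith : (0:ℝ) ≤ 1 - t)
        (le_of_lt ht0) (by ring)
      simpa [smul_eq_mul] using this
    have hs := hstep (xp + t • w)
    have e1 : ⟪v, xp + t • w⟫ = ⟪v, xp⟫ + t * ⟪v, w⟫ := by
      rw [inner_add_right, real_inner_smul_right]
    have e2 : ‖xp + t • w - x‖ ^ 2
        = ‖xp - x‖ ^ 2 + 2 * (t * ⟪xp - x, w⟫) + t ^ 2 * ‖w‖ ^ 2 := by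
      have : xp + t • w - x = (xp - x) + t • w := by abel
      rw [this, norm_add_sq_real, real_inner_smul_right, norm_smul, Real.norm_eq_abs,
        abs_of_pos ht0, mul_pow]
    rw [e1, e2] at hs
    have hs2 : g xp + ⟪v, xp⟫ + q * ‖xp - x‖ ^ 2 ≤ ((1 - t) * g xp + t * g y)
        + (⟪v, xp⟫ + t * ⟪v, w⟫)
        + q * (‖xp - x‖ ^ 2 + 2 * (t * ⟪xp - x, w⟫) + t ^ 2 * ‖w‖ ^ 2) := by
      refine le_trans hs ?_
      gcongr
    have hts : t * (g xp - g y - ⟪v, w⟫ - 2 * q * ⟪xp - x, w⟫) ≤ t * (t * (q * ‖w‖ ^ 2)) := by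
      nlinarith [hs2]
    have := le_of_mul_le_mul_left hts ht0
    nlinarith [this, mul_le_mul_of_nonneg_left ht1 (le_of_lt (mul_pos ht0 (by positivity : (0:ℝ) < q * ‖w‖^2 + 1)))]
  have hid : 2 * ⟪xp - x, w⟫ = ‖y - x‖ ^ 2 - ‖y - xp‖ ^ 2 - ‖xp - x‖ ^ 2 := by
    have hd : y - x = (y - xp) + (xp - x) := by abel
    rw [hd, norm_add_sq_real, hw, real_inner_comm]
    ring
  have hv : ⟪v, xp - y⟫ = -⟪v, w⟫ := by
    rw [hw, ← inner_neg_right]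
    congr 1
    abel
  nlinarith [hc, hid, hv]

lemma vr_prox_unique (g : E → ℝ) (hg : ConvexOn ℝ Set.univ g) (q : ℝ) (hq : 0 < q)
    (v x xp xp' : E)
    (h1 : ∀ y, g xp + ⟪v, xp⟫ + q * ‖xp - x‖ ^ 2 ≤ g y + ⟪v, y⟫ + q * ‖y - x‖ ^ 2)
    (h2 : ∀ y, g xp' + ⟪v, xp'⟫ + q * ‖xp' - x‖ ^ 2 ≤ g y + ⟪v, y⟫ + q * ‖y - x‖ ^ 2) :
    xp = xp' := by
  have t1 := vr_three_point g hg q hq v x xp h1 xp'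
  have t2 := vr_three_point g hg q hq v x xp' h2 xp
  have hinner : ⟪v, xp - xp'⟫ + ⟪v, xp' - xp⟫ = 0 := by
    rw [← inner_add_right]
    have : xp - xp' + (xp' - xp) = 0 := by abel
    rw [this, inner_zero_right]
  have hrev : ‖xp' - xp‖ = ‖xp - xp'‖ := norm_sub_rev _ _
  have hsq : ‖xp - xp'‖ ^ 2 ≤ 0 := by nlinarith [t1, t2, hinner, hrev]
  have : ‖xp - xp'‖ = 0 := by nlinarith [norm_nonneg (xp - xp'), sq_nonneg ‖xp - xp'‖]
  exact eq_of_sub_eq_zero (norm_eq_zero.mp this)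

end TP




section FA
variable {E : Type*} [NormedAddCommGroup E] [InnerProductSpace ℝ E] [CompleteSpace E]
variable {n : ℕ} {f : Fin n → E → ℝ} {favg : E → ℝ}

lemma vr_favg_diff (hdiff : ∀ i, Differentiable ℝ (f i))
    (hfavg : ∀ z, favg z = (1/n : ℝ) * ∑ i, f i z) : Differentiable ℝ favg := by
  have : favg = fun z => (1/n : ℝ) * ∑ i, f i z := funext hfavg
  rw [this]
  exact Differentiable.const_mul (Differentiable.fun_sum fun i _ => hdiff i) _

lemma vr_favg_grad (hdiff : ∀ i, Differentiable ℝ (f i))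
    (hfavg : ∀ z, favg z = (1/n : ℝ) * ∑ i, f i z) (z : E) :
    gradient favg z = (1/n : ℝ) • ∑ i, gradient (f i) z := by
  have h1 : HasFDerivAt (fun z : E => ∑ i, f i z)
      (∑ i, InnerProductSpace.toDual ℝ E (gradient (f i) z)) z :=
    HasFDerivAt.fun_sum (fun i _ => (hdiff i z).hasGradientAt.hasFDerivAt)
  have h2 : HasFDerivAt favg ((1/n:ℝ) • ∑ i, InnerProductSpace.toDual ℝ E (gradient (f i) z)) z := by
    have : favg = fun z => (1/n : ℝ) * ∑ i, f i z := funext hfavg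
    rw [this]
    exact h1.const_mul _
  have h3 : (1/n:ℝ) • ∑ i, InnerProductSpace.toDual ℝ E (gradient (f i) z)
      = InnerProductSpace.toDual ℝ E ((1/n : ℝ) • ∑ i, gradient (f i) z) := by
    rw [map_smul, map_sum]
  rw [h3] at h2
  have := h2.hasGradientAt.gradient
  rwa [LinearIsometryEquiv.symm_apply_apply] at this

lemma vr_favg_sumgrad (hn : 0 < n) (hdiff : ∀ i, Differentiable ℝ (f i))
    (hfavg : ∀ z, favg z = (1/n : ℝ) * ∑ i, f i z) (z : E) :
    ∑ i, gradient (f i) z = (n : ℝ) • gradient favg z := by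
  have hn' : (n:ℝ) ≠ 0 := Nat.cast_ne_zero.mpr hn.ne'
  rw [vr_favg_grad hdiff hfavg, smul_smul, mul_one_div, div_self hn', one_smul]

lemma vr_favg_conv (hconv : ∀ i, ConvexOn ℝ Set.univ (f i))
    (hfavg : ∀ z, favg z = (1/n : ℝ) * ∑ i, f i z) : ConvexOn ℝ Set.univ favg := by
  constructor
  · exact convex_univ
  · intro p _ q _ a b ha hb hab
    rw [hfavg, hfavg, hfavg, smul_eq_mul, smul_eq_mul]
    have hstep : ∑ i, f i (a • p + b • q) ≤ ∑ i, (a * f i p + b * f i q) := by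
      apply Finset.sum_le_sum
      intro i _
      have := (hconv i).2 (Set.mem_univ p) (Set.mem_univ q) ha hb hab
      simpa [smul_eq_mul] using this
    have h1 : (1/n : ℝ) * ∑ i, f i (a • p + b • q) ≤ (1/n : ℝ) * ∑ i, (a * f i p + b * f i q) := by
      apply mul_le_mul_of_nonneg_left hstep (by positivity)
    have h2 : (1/n : ℝ) * ∑ i, (a * f i p + b * f i q)
        = a * ((1/n : ℝ) * ∑ i, f i p) + b * ((1/n : ℝ) * ∑ i, f i q) := by
      rw [Finset.sum_add_distrib, ← Finset.mul_sum, ← Finset.mul_sum]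
      ring
    linarith

lemma vr_favg_lip (L : ℝ) (hn : 0 < n)
    (hlip : ∀ i (a b : E), ‖gradient (f i) a - gradient (f i) b‖ ≤ L * ‖a - b‖)
    (hdiff : ∀ i, Differentiable ℝ (f i))
    (hfavg : ∀ z, favg z = (1/n : ℝ) * ∑ i, f i z) (a b : E) :
    ‖gradient favg a - gradient favg b‖ ≤ L * ‖a - b‖ := by
  have hn' : (0:ℝ) < n := Nat.cast_pos.mpr hn
  rw [vr_favg_grad hdiff hfavg, vr_favg_grad hdiff hfavg, ← smul_sub, ← Finset.sum_sub_distrib,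
    norm_smul, Real.norm_eq_abs]
  have h1 : ‖∑ i, (gradient (f i) a - gradient (f i) b)‖ ≤ (n:ℝ) * (L * ‖a - b‖) := by
    calc ‖∑ i, (gradient (f i) a - gradient (f i) b)‖
        ≤ ∑ i, ‖gradient (f i) a - gradient (f i) b‖ := norm_sum_le _ _
      _ ≤ ∑ _i : Fin n, L * ‖a - b‖ := Finset.sum_le_sum fun i _ => hlip i a b
      _ = (n:ℝ) * (L * ‖a - b‖) := by
          rw [Finset.sum_const, Finset.card_univ, Fintype.card_fin, nsmul_eq_mul]
  have habs : |(1/n : ℝ)| = 1/n := abs_of_pos (by positivity)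
  rw [habs]
  calc (1/n : ℝ) * ‖∑ i, (gradient (f i) a - gradient (f i) b)‖
      ≤ (1/n : ℝ) * ((n:ℝ) * (L * ‖a - b‖)) := by
        apply mul_le_mul_of_nonneg_left h1 (by positivity)
    _ = L * ‖a - b‖ := by field_simp

lemma vr_star {g F : E → ℝ} {xstar : E} (L : ℝ) (hL : 0 < L) (hn : 0 < n)
    (hconv : ∀ i, ConvexOn ℝ Set.univ (f i))
    (hdiff : ∀ i, Differentiable ℝ (f i))
    (hlip : ∀ i (a b : E), ‖gradient (f i) a - gradient (f i) b‖ ≤ L * ‖a - b‖)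
    (hfavg : ∀ z, favg z = (1/n : ℝ) * ∑ i, f i z)
    (hgconv : ConvexOn ℝ Set.univ g)
    (hF : ∀ z, F z = favg z + g z)
    (hmin : ∀ z, F xstar ≤ F z) (z : E) :
    g xstar - ⟪gradient favg xstar, z - xstar⟫ ≤ g z := by
  have hfd : Differentiable ℝ favg := vr_favg_diff hdiff hfavg
  have hflip : ∀ a b : E, ‖gradient favg a - gradient favg b‖ ≤ L * ‖a - b‖ :=
    fun a b => vr_favg_lip L hn hlip hdiff hfavg a b
  have key : g xstar - g z - ⟪gradient favg xstar, z - xstar⟫ ≤ 0 := by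
    apply vr_eps_le (K := L/2 * ‖z - xstar‖^2) (by positivity)
    intro t ht0 ht1
    set w : E := z - xstar with hw
    have hpt : xstar + t • w = (1-t) • xstar + t • z := by rw [hw]; module
    have h1 := hmin (xstar + t • w)
    rw [hF, hF] at h1
    have h2 : favg (xstar + t • w) ≤ favg xstar + t * ⟪gradient favg xstar, w⟫
        + L/2 * (t^2 * ‖w‖^2) := by
      have hd := vr_descent favg hfd L hL hflip xstar (xstar + t • w)
      have e1 : xstar + t • w - xstar = t • w := by abel
      rw [e1, real_inner_smul_right, norm_smul, Real.norm_eq_abs, abs_of_pos ht0, mul_pow] at hd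
      linarith [hd]
    have h3 : g (xstar + t • w) ≤ (1-t) * g xstar + t * g z := by
      rw [hpt]
      have := hgconv.2 (Set.mem_univ xstar) (Set.mem_univ z) (by linarith : (0:ℝ) ≤ 1 - t)
        (le_of_lt ht0) (by ring)
      simpa [smul_eq_mul] using this
    have hts : t * (g xstar - g z - ⟪gradient favg xstar, w⟫) ≤ t * (t * (L/2 * ‖w‖^2)) := by
      nlinarith [h1, h2, h3]
    exact le_of_mul_le_mul_left hts ht0
  linarith

end FA

set_option linter.unusedSectionVars false
set_option linter.unusedVariables false
set_option maxHeartbeats 1000000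



section KEY
variable {E : Type*} [NormedAddCommGroup E] [InnerProductSpace ℝ E] [CompleteSpace E]

lemma vr_key (n : ℕ) (hn : 0 < n) (L β : ℝ) (hL : 0 < L) (hβ : 5 < β)
    (f : Fin n → E → ℝ)
    (hconv : ∀ i, ConvexOn ℝ Set.univ (f i))
    (hdiff : ∀ i, Differentiable ℝ (f i))
    (hlip : ∀ i (a b : E), ‖gradient (f i) a - gradient (f i) b‖ ≤ L * ‖a - b‖)
    (favg : E → ℝ) (hfavg : ∀ z, favg z = (1/n : ℝ) * ∑ i, f i z)
    (g : E → ℝ) (hgconv : ConvexOn ℝ Set.univ g)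
    (F : E → ℝ) (hF : ∀ z, F z = favg z + g z)
    (xstar : E) (hmin : ∀ z, F xstar ≤ F z)
    (X Xt : E) (Xp : Fin n → E)
    (hprox : ∀ (j : Fin n) (y : E),
      g (Xp j) + ⟪gradient (f j) X - gradient (f j) Xt + gradient favg Xt, Xp j⟫
        + (L*β/2) * ‖Xp j - X‖ ^ 2
      ≤ g y + ⟪gradient (f j) X - gradient (f j) Xt + gradient favg Xt, y⟫
        + (L*β/2) * ‖y - X‖ ^ 2) :
    ∑ j, F (Xp j) ≤ (n : ℝ) * F xstar
      + 2 * n / (β - 1) * ((F X - F xstar) + (F Xt - F xstar))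
      + (L * β / 2) * ((n:ℝ) * ‖X - xstar‖ ^ 2 - ∑ j, ‖Xp j - xstar‖ ^ 2) := by
  have hβ1 : (0:ℝ) < β - 1 := by linarith
  have hn' : (0:ℝ) < n := Nat.cast_pos.mpr hn
  have hfd : Differentiable ℝ favg := vr_favg_diff hdiff hfavg
  have hfc : ConvexOn ℝ Set.univ favg := vr_favg_conv hconv hfavg
  have hflip : ∀ a b : E, ‖gradient favg a - gradient favg b‖ ≤ L * ‖a - b‖ :=
    fun a b => vr_favg_lip L hn hlip hdiff hfavg a b
  have hsumgrad := vr_favg_sumgrad (favg := favg) hn hdiff hfavg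
  set c : ℝ := (β - 1) * L with hc
  have hcpos : 0 < c := mul_pos hβ1 hL
  set v : Fin n → E := fun j => gradient (f j) X - gradient (f j) Xt + gradient favg Xt with hv
  set Δ : Fin n → E := fun j => gradient favg X - v j with hΔ
  -- Step 1: per-j bound
  have hstep1 : ∀ j, F (Xp j) ≤ F xstar + 1/(2*c) * ‖Δ j‖^2 + ⟪Δ j, X - xstar⟫
      + (L*β/2) * (‖xstar - X‖^2 - ‖xstar - Xp j‖^2) := by
    intro j
    have h3p := vr_three_point g hgconv (L*β/2) (by positivity) (v j) X (Xp j) (hprox j) xstar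
    have hdesc := vr_descent favg hfd L hL hflip X (Xp j)
    have hcvx := vr_convex_inner_le favg hfc hfd X xstar
    have hFp : F (Xp j) = favg (Xp j) + g (Xp j) := hF _
    have hFs : F xstar = favg xstar + g xstar := hF _
    -- inner product rearrangement
    have e1 : ⟪gradient favg X, Xp j - X⟫ - ⟪gradient favg X, xstar - X⟫
        - ⟪v j, Xp j - xstar⟫ = ⟪Δ j, Xp j - X⟫ + ⟪Δ j, X - xstar⟫ := by
      simp only [hΔ, inner_sub_left, inner_sub_right]
      ring
    -- Young's inequality
    have hyoung : ⟪Δ j, Xp j - X⟫ ≤ 1/(2*c) * ‖Δ j‖^2 + c/2 * ‖Xp j - X‖^2 := by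
      have hab := real_inner_le_norm (Δ j) (Xp j - X)
      have h2c : (0:ℝ) < 2*c := by linarith
      have key2 : ‖Δ j‖ * ‖Xp j - X‖ ≤ (‖Δ j‖^2 + c^2 * ‖Xp j - X‖^2)/(2*c) := by
        rw [le_div_iff₀ h2c]
        nlinarith [sq_nonneg (‖Δ j‖ - c * ‖Xp j - X‖)]
      have e2 : (‖Δ j‖^2 + c^2 * ‖Xp j - X‖^2)/(2*c)
          = 1/(2*c) * ‖Δ j‖^2 + c/2 * ‖Xp j - X‖^2 := by
        field_simp
      linarith
    have hcoef : c/2 * ‖Xp j - X‖^2 + L/2 * ‖Xp j - X‖^2 = L*β/2 * ‖Xp j - X‖^2 := by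
      rw [hc]; ring
    linarith [h3p, hdesc, hcvx, hyoung, e1, hcoef]
  -- Step 2: sum of Δ is zero
  have hΔsum : ∑ j, Δ j = 0 := by
    have h1 : ∑ j, Δ j = (n:ℝ) • gradient favg X - ∑ j, v j := by
      rw [hΔ]
      rw [Finset.sum_sub_distrib, Finset.sum_const, Finset.card_univ, Fintype.card_fin]
      congr 1
      rw [← Nat.cast_smul_eq_nsmul ℝ]
    have h2 : ∑ j, v j = (n:ℝ) • gradient favg X := by
      rw [hv]
      have : ∑ j, (gradient (f j) X - gradient (f j) Xt + gradient favg Xt)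
          = (∑ j, gradient (f j) X) - (∑ j, gradient (f j) Xt)
            + (n:ℝ) • gradient favg Xt := by
        rw [Finset.sum_add_distrib, Finset.sum_sub_distrib, Finset.sum_const,
          Finset.card_univ, Fintype.card_fin, ← Nat.cast_smul_eq_nsmul ℝ]
      rw [this, hsumgrad X, hsumgrad Xt]
      abel
    rw [h1, h2, sub_self]
  -- Step 3: variance bound
  have hvar : ∑ j, ‖Δ j‖^2 ≤ 4*L*(n:ℝ)*((F X - F xstar) + (F Xt - F xstar)) := by
    set Y : Fin n → E := fun j => gradient (f j) X - gradient (f j) Xt with hY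
    set Yb : E := gradient favg X - gradient favg Xt with hYb
    have hYsum : ∑ j, Y j = (n:ℝ) • Yb := by
      rw [hY, hYb, Finset.sum_sub_distrib, hsumgrad X, hsumgrad Xt, smul_sub]
    have hΔY : ∀ j, Δ j = Yb - Y j := by
      intro j
      show gradient favg X - (gradient (f j) X - gradient (f j) Xt + gradient favg Xt)
          = (gradient favg X - gradient favg Xt) - (gradient (f j) X - gradient (f j) Xt)
      abel
    have hs1 : ∑ j, ‖Δ j‖^2 ≤ ∑ j, ‖Y j‖^2 := by
      have expand : ∀ j, ‖Δ j‖^2 = ‖Yb‖^2 - 2*⟪Yb, Y j⟫ + ‖Y j‖^2 := by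
        intro j
        rw [hΔY j, norm_sub_sq_real]
      have hsum2 : ∑ j, ⟪Yb, Y j⟫ = (n:ℝ) * ‖Yb‖^2 := by
        rw [← inner_sum, hYsum, real_inner_smul_right, real_inner_self_eq_norm_sq]
      calc ∑ j, ‖Δ j‖^2 = ∑ j, (‖Yb‖^2 - 2*⟪Yb, Y j⟫ + ‖Y j‖^2) := by
            exact Finset.sum_congr rfl fun j _ => expand j
        _ = (n:ℝ)*‖Yb‖^2 - 2*((n:ℝ)*‖Yb‖^2) + ∑ j, ‖Y j‖^2 := by
            rw [Finset.sum_add_distrib, Finset.sum_sub_distrib, Finset.sum_const,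
              Finset.card_univ, Fintype.card_fin, ← Finset.mul_sum, hsum2, nsmul_eq_mul]
        _ ≤ ∑ j, ‖Y j‖^2 := by nlinarith [sq_nonneg ‖Yb‖, hn']
    have hs2 : ∀ j, ‖Y j‖^2 ≤ 2*‖gradient (f j) X - gradient (f j) xstar‖^2
        + 2*‖gradient (f j) Xt - gradient (f j) xstar‖^2 := by
      intro j
      have hdec : Y j = (gradient (f j) X - gradient (f j) xstar)
          - (gradient (f j) Xt - gradient (f j) xstar) := by rw [hY]; abel
      rw [hdec]
      have := norm_sub_le (gradient (f j) X - gradient (f j) xstar)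
        (gradient (f j) Xt - gradient (f j) xstar)
      nlinarith [norm_nonneg (gradient (f j) X - gradient (f j) xstar),
        norm_nonneg (gradient (f j) Xt - gradient (f j) xstar),
        norm_nonneg ((gradient (f j) X - gradient (f j) xstar)
          - (gradient (f j) Xt - gradient (f j) xstar)),
        sq_nonneg (‖gradient (f j) X - gradient (f j) xstar‖
          - ‖gradient (f j) Xt - gradient (f j) xstar‖)]
    -- cocoercivity sums
    have hcoco : ∀ (Z : E), ∑ j, ‖gradient (f j) Z - gradient (f j) xstar‖^2
        ≤ 2*L*(n:ℝ)*(F Z - F xstar) := by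
      intro Z
      have h1 : ∀ j, ‖gradient (f j) Z - gradient (f j) xstar‖^2
          ≤ 2*L*(f j Z - f j xstar - ⟪gradient (f j) xstar, Z - xstar⟫) :=
        fun j => vr_cocoercive (f j) (hconv j) (hdiff j) L hL (hlip j) Z xstar
      have h2 : ∑ j, ‖gradient (f j) Z - gradient (f j) xstar‖^2
          ≤ 2*L*((∑ j, f j Z) - (∑ j, f j xstar) - ⟪∑ j, gradient (f j) xstar, Z - xstar⟫) := by
        calc ∑ j, ‖gradient (f j) Z - gradient (f j) xstar‖^2
            ≤ ∑ j, 2*L*(f j Z - f j xstar - ⟪gradient (f j) xstar, Z - xstar⟫) :=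
              Finset.sum_le_sum fun j _ => h1 j
          _ = 2*L*((∑ j, f j Z) - (∑ j, f j xstar) - ⟪∑ j, gradient (f j) xstar, Z - xstar⟫) := by
              rw [← Finset.mul_sum, sum_inner, Finset.sum_sub_distrib, Finset.sum_sub_distrib]
      have hsZ : (∑ j, f j Z) = (n:ℝ) * favg Z := by
        rw [hfavg Z]
        field_simp
      have hsS : (∑ j, f j xstar) = (n:ℝ) * favg xstar := by
        rw [hfavg xstar]
        field_simp
      have hinn : ⟪∑ j, gradient (f j) xstar, Z - xstar⟫
          = (n:ℝ) * ⟪gradient favg xstar, Z - xstar⟫ := by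
        rw [hsumgrad xstar, real_inner_smul_left]
      have hstarZ : g xstar - ⟪gradient favg xstar, Z - xstar⟫ ≤ g Z :=
        vr_star L hL hn hconv hdiff hlip hfavg hgconv hF hmin Z
      have hFZ : F Z = favg Z + g Z := hF Z
      have hFs : F xstar = favg xstar + g xstar := hF xstar
      rw [hsZ, hsS, hinn] at h2
      have hfin : favg Z - favg xstar - ⟪gradient favg xstar, Z - xstar⟫ ≤ F Z - F xstar := by
        rw [hFZ, hFs]
        linarith [hstarZ]
      calc ∑ j, ‖gradient (f j) Z - gradient (f j) xstar‖^2
          ≤ 2*L*((n:ℝ) * favg Z - (n:ℝ) * favg xstar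
              - (n:ℝ) * ⟪gradient favg xstar, Z - xstar⟫) := h2
        _ = 2*L*(n:ℝ)*(favg Z - favg xstar - ⟪gradient favg xstar, Z - xstar⟫) := by ring
        _ ≤ 2*L*(n:ℝ)*(F Z - F xstar) := by
            apply mul_le_mul_of_nonneg_left hfin (by positivity)
    calc ∑ j, ‖Δ j‖^2 ≤ ∑ j, ‖Y j‖^2 := hs1
      _ ≤ ∑ j, (2*‖gradient (f j) X - gradient (f j) xstar‖^2
          + 2*‖gradient (f j) Xt - gradient (f j) xstar‖^2) :=
          Finset.sum_le_sum fun j _ => hs2 j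
      _ = 2*(∑ j, ‖gradient (f j) X - gradient (f j) xstar‖^2)
          + 2*(∑ j, ‖gradient (f j) Xt - gradient (f j) xstar‖^2) := by
          rw [Finset.sum_add_distrib, ← Finset.mul_sum, ← Finset.mul_sum]
      _ ≤ 2*(2*L*(n:ℝ)*(F X - F xstar)) + 2*(2*L*(n:ℝ)*(F Xt - F xstar)) := by
          have := hcoco X
          have := hcoco Xt
          linarith [hcoco X, hcoco Xt]
      _ = 4*L*(n:ℝ)*((F X - F xstar) + (F Xt - F xstar)) := by ring
  -- Step 4: assemble
  have hsum := Finset.sum_le_sum (fun j (_ : j ∈ Finset.univ) => hstep1 j)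
  have hRHS : ∑ j : Fin n, (F xstar + 1/(2*c) * ‖Δ j‖^2 + ⟪Δ j, X - xstar⟫
      + (L*β/2) * (‖xstar - X‖^2 - ‖xstar - Xp j‖^2))
      = (n:ℝ) * F xstar + 1/(2*c) * (∑ j, ‖Δ j‖^2) + ⟪∑ j, Δ j, X - xstar⟫
        + (L*β/2) * ((n:ℝ) * ‖xstar - X‖^2 - ∑ j, ‖xstar - Xp j‖^2) := by
    rw [Finset.sum_add_distrib, Finset.sum_add_distrib, Finset.sum_add_distrib,
      Finset.sum_const, Finset.card_univ, Fintype.card_fin, nsmul_eq_mul,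
      ← Finset.mul_sum, sum_inner, ← Finset.mul_sum, Finset.sum_sub_distrib,
      Finset.sum_const, Finset.card_univ, Fintype.card_fin, nsmul_eq_mul]
  rw [hRHS, hΔsum, inner_zero_left] at hsum
  have hcvt : 1/(2*c) * (∑ j, ‖Δ j‖^2) ≤ 2 * n / (β - 1) * ((F X - F xstar) + (F Xt - F xstar)) := by
    have h1 : 1/(2*c) * (∑ j, ‖Δ j‖^2) ≤ 1/(2*c) * (4*L*(n:ℝ)*((F X - F xstar) + (F Xt - F xstar))) := by
      apply mul_le_mul_of_nonneg_left hvar (by positivity)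
    have h2 : 1/(2*c) * (4*L*(n:ℝ)*((F X - F xstar) + (F Xt - F xstar)))
        = 2 * n / (β - 1) * ((F X - F xstar) + (F Xt - F xstar)) := by
      rw [hc]
      field_simp
      ring
    linarith
  have hnorms : ∀ z : E, ‖xstar - z‖ = ‖z - xstar‖ := fun z => norm_sub_rev _ _
  have hnn : (n:ℝ) * ‖xstar - X‖^2 - ∑ j, ‖xstar - Xp j‖^2
      = (n:ℝ) * ‖X - xstar‖^2 - ∑ j, ‖Xp j - xstar‖^2 := by
    rw [hnorms X]
    congr 1
    exact Finset.sum_congr rfl fun j _ => by rw [hnorms (Xp j)]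
  rw [hnn] at hsum
  linarith [hsum, hcvt]

end KEY

set_option linter.unusedSectionVars false
set_option linter.unusedVariables false
set_option maxHeartbeats 2000000



/-- O(1/T) convergence of VR-SGD (Option I) for non-smooth composite,
non-strongly convex objectives F = f + g; inner steps are proximal steps (stated via
the minimizing property), and expectations are uniform averages over
`ω : Fin S → Fin m → Fin n`. -/
theorem stmt_13 (d n m S : ℕ) (hn : 0 < n) (hm : 0 < m) (hS : 0 < S)
    (L β η : ℝ) (hL : 0 < L) (hβ : 5 < β) (hη : η = 1 / (L * β))
    (f : Fin n → EuclideanSpace ℝ (Fin d) → ℝ)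
    (hconv : ∀ i, ConvexOn ℝ Set.univ (f i))
    (hdiff : ∀ i, Differentiable ℝ (f i))
    (hlip : ∀ i x y, ‖gradient (f i) x - gradient (f i) y‖ ≤ L * ‖x - y‖)
    (favg : EuclideanSpace ℝ (Fin d) → ℝ)
    (hfavg : ∀ x, favg x = (1 / n : ℝ) * ∑ i, f i x)
    (g : EuclideanSpace ℝ (Fin d) → ℝ) (hgconv : ConvexOn ℝ Set.univ g)
    (F : EuclideanSpace ℝ (Fin d) → ℝ) (hF : ∀ x, F x = favg x + g x)
    (xstar : EuclideanSpace ℝ (Fin d)) (hmin : ∀ x, F xstar ≤ F x)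
    (xt0 : EuclideanSpace ℝ (Fin d))
    (x : (Fin S → Fin m → Fin n) → ℕ → ℕ → EuclideanSpace ℝ (Fin d))
    (xt : (Fin S → Fin m → Fin n) → ℕ → EuclideanSpace ℝ (Fin d))
    (hxt0 : ∀ ω, xt ω 0 = xt0)
    (hstart0 : ∀ ω, x ω 0 0 = xt0)
    (hstart : ∀ ω (s : ℕ), s + 1 < S → x ω (s + 1) 0 = x ω s m)
    (hstep : ∀ ω (s : Fin S) (k : Fin m), ∀ y,
      g (x ω (s : ℕ) ((k : ℕ) + 1))
          + ⟪gradient (f (ω s k)) (x ω (s : ℕ) (k : ℕ))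
              - gradient (f (ω s k)) (xt ω (s : ℕ)) + gradient favg (xt ω (s : ℕ)),
            x ω (s : ℕ) ((k : ℕ) + 1)⟫
          + (1 / (2 * η)) * ‖x ω (s : ℕ) ((k : ℕ) + 1) - x ω (s : ℕ) (k : ℕ)‖ ^ 2
        ≤ g y
          + ⟪gradient (f (ω s k)) (x ω (s : ℕ) (k : ℕ))
              - gradient (f (ω s k)) (xt ω (s : ℕ)) + gradient favg (xt ω (s : ℕ)), y⟫
          + (1 / (2 * η)) * ‖y - x ω (s : ℕ) (k : ℕ)‖ ^ 2)
    (hsnap : ∀ ω (s : Fin S),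
      xt ω ((s : ℕ) + 1) = (1 / m : ℝ) • ∑ k ∈ Finset.range m, x ω (s : ℕ) (k + 1))
    (xhat : (Fin S → Fin m → Fin n) → EuclideanSpace ℝ (Fin d))
    (hout : ∀ ω,
      (F (xt ω S) ≤ F ((1 / S : ℝ) • ∑ s ∈ Finset.range S, xt ω (s + 1)) →
        xhat ω = xt ω S) ∧
      (¬ F (xt ω S) ≤ F ((1 / S : ℝ) • ∑ s ∈ Finset.range S, xt ω (s + 1)) →
        xhat ω = (1 / S : ℝ) • ∑ s ∈ Finset.range S, xt ω (s + 1))) :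
    (Fintype.card (Fin S → Fin m → Fin n) : ℝ)⁻¹ *
        ∑ ω : Fin S → Fin m → Fin n, (F (xhat ω)) - F xstar
      ≤ (2 * (m + 1) / ((β - 5) * m * S)) * (F xt0 - F xstar)
        + (β * (β - 1) * L / (2 * (β - 5) * m * S)) * ‖xt0 - xstar‖ ^ 2 := by
  have hβ0 : (0:ℝ) < β := by linarith
  have hβ1 : (0:ℝ) < β - 1 := by linarith
  have hβ5 : (0:ℝ) < β - 5 := by linarith
  have hn' : (0:ℝ) < n := Nat.cast_pos.mpr hn
  have hm' : (0:ℝ) < m := Nat.cast_pos.mpr hm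
  have hS' : (0:ℝ) < S := Nat.cast_pos.mpr hS
  have hq' : 1 / (2 * η) = L * β / 2 := by
    rw [hη]
    field_simp
  -- the coordinate update function
  set upd : (Fin S → Fin m → Fin n) → Fin S → Fin m → Fin n → (Fin S → Fin m → Fin n) :=
    fun ω s k j => Function.update ω s (Function.update (ω s) k j) with hupd
  have hupd_eval : ∀ ω (s : Fin S) (k : Fin m) (j : Fin n), upd ω s k j s k = j := by
    intro ω s k j
    simp [hupd]
  have hupd_ne : ∀ ω (s : Fin S) (k : Fin m) (j : Fin n) (s' : Fin S) (k' : Fin m),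
      ¬(s' = s ∧ k' = k) → upd ω s k j s' k' = ω s' k' := by
    intro ω s k j s' k' hne
    by_cases hs : s' = s
    · subst hs
      have hk : k' ≠ k := fun h => hne ⟨rfl, h⟩
      simp [hupd, Function.update_self, Function.update_of_ne hk]
    · simp [hupd, Function.update_of_ne hs]
  have hupd_inv : ∀ ω (s : Fin S) (k : Fin m) (j : Fin n),
      upd (upd ω s k j) s k (ω s k) = ω := by
    intro ω s k j
    funext s' k'
    by_cases hs : s' = s
    · subst hs
      by_cases hk : k' = k
      · subst hk
        rw [hupd_eval]
      · rw [hupd_ne _ _ _ _ _ _ (fun h => hk h.2), hupd_ne _ _ _ _ _ _ (fun h => hk h.2)]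
    · rw [hupd_ne _ _ _ _ _ _ (fun h => hs h.1), hupd_ne _ _ _ _ _ _ (fun h => hs h.1)]
  have sum_upd : ∀ (G : (Fin S → Fin m → Fin n) → ℝ) (s : Fin S) (k : Fin m),
      ∑ ω : Fin S → Fin m → Fin n, ∑ j : Fin n, G (upd ω s k j)
        = (n:ℝ) * ∑ ω : Fin S → Fin m → Fin n, G ω := by
    intro G s k
    have key : ∑ p : (Fin S → Fin m → Fin n) × Fin n, G (upd p.1 s k p.2)
        = ∑ p : (Fin S → Fin m → Fin n) × Fin n, G p.1 := by
      apply Fintype.sum_equiv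
        ⟨fun p => (upd p.1 s k p.2, p.1 s k), fun p => (upd p.1 s k p.2, p.1 s k),
          fun p => Prod.ext (hupd_inv p.1 s k p.2) (hupd_eval p.1 s k p.2),
          fun p => Prod.ext (hupd_inv p.1 s k p.2) (hupd_eval p.1 s k p.2)⟩
        (fun p => G (upd p.1 s k p.2)) (fun p => G p.1)
      intro p
      rfl
    rw [Fintype.sum_prod_type] at key
    rw [key, Fintype.sum_prod_type, Finset.mul_sum]
    apply Finset.sum_congr rfl
    intro ω _
    simp [Finset.sum_const, Finset.card_univ, mul_comm]
  -- adaptedness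
  have adapt : ∀ t : ℕ, ∀ ω ω' : Fin S → Fin m → Fin n,
      (∀ (s' : Fin S) (k' : Fin m), (s' : ℕ) * m + (k' : ℕ) < t → ω s' k' = ω' s' k') →
      (∀ s k : ℕ, s < S → k ≤ m → s * m + k = t → x ω s k = x ω' s k) := by
    intro t
    induction t using Nat.strong_induction_on with
    | _ t IH =>
      intro ω ω' hagree
      have hxteq : ∀ s : ℕ, s ≤ S → s * m < t → xt ω s = xt ω' s := by
        intro s hsS hst
        match s with
        | 0 => rw [hxt0, hxt0]
        | Nat.succ s'' =>
          have hs'' : s'' < S := lt_of_lt_of_le (Nat.lt_succ_self s'') hsS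
          have hsnap1 : xt ω (s''+1) = (1/m:ℝ) • ∑ k ∈ Finset.range m, x ω s'' (k+1) :=
            hsnap ω ⟨s'', hs''⟩
          have hsnap2 : xt ω' (s''+1) = (1/m:ℝ) • ∑ k ∈ Finset.range m, x ω' s'' (k+1) :=
            hsnap ω' ⟨s'', hs''⟩
          rw [hsnap1, hsnap2]
          congr 1
          apply Finset.sum_congr rfl
          intro k hk
          have hkm : k < m := Finset.mem_range.mp hk
          have ht'' : s'' * m + (k + 1) < t := by
            have h1 : s'' * m + (k + 1) ≤ s'' * m + m := by omega
            have h2 : s'' * m + m = (s'' + 1) * m := by ring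
            have h3 : (s'' + 1) * m < t := hst
            omega
          exact IH _ ht'' ω ω' (fun s' k' h => hagree s' k' (lt_trans h ht''))
            s'' (k+1) hs'' (by omega) rfl
      have main : ∀ s k' : ℕ, s < S → k' < m → s * m + (k'+1) = t →
          x ω s (k'+1) = x ω' s (k'+1) := by
        intro s k' hsS hkm hteq
        have hxk : x ω s k' = x ω' s k' :=
          IH (s*m+k') (by omega) ω ω' (fun s' kk h => hagree s' kk (by omega)) s k' hsS
            (le_of_lt hkm) rfl
        have hxt : xt ω s = xt ω' s := hxteq s (le_of_lt hsS) (by omega)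
        have hωeq : ω ⟨s,hsS⟩ ⟨k',hkm⟩ = ω' ⟨s,hsS⟩ ⟨k',hkm⟩ :=
          hagree ⟨s,hsS⟩ ⟨k',hkm⟩ (show s*m+k' < t by omega)
        have h1 : ∀ y, g (x ω s (k' + 1))
            + ⟪gradient (f (ω ⟨s,hsS⟩ ⟨k',hkm⟩)) (x ω s k')
                - gradient (f (ω ⟨s,hsS⟩ ⟨k',hkm⟩)) (xt ω s) + gradient favg (xt ω s),
              x ω s (k' + 1)⟫
            + (1 / (2 * η)) * ‖x ω s (k' + 1) - x ω s k'‖ ^ 2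
          ≤ g y
            + ⟪gradient (f (ω ⟨s,hsS⟩ ⟨k',hkm⟩)) (x ω s k')
                - gradient (f (ω ⟨s,hsS⟩ ⟨k',hkm⟩)) (xt ω s) + gradient favg (xt ω s), y⟫
            + (1 / (2 * η)) * ‖y - x ω s k'‖ ^ 2 := hstep ω ⟨s,hsS⟩ ⟨k',hkm⟩
        have h2 : ∀ y, g (x ω' s (k' + 1))
            + ⟪gradient (f (ω' ⟨s,hsS⟩ ⟨k',hkm⟩)) (x ω' s k')
                - gradient (f (ω' ⟨s,hsS⟩ ⟨k',hkm⟩)) (xt ω' s) + gradient favg (xt ω' s),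
              x ω' s (k' + 1)⟫
            + (1 / (2 * η)) * ‖x ω' s (k' + 1) - x ω' s k'‖ ^ 2
          ≤ g y
            + ⟪gradient (f (ω' ⟨s,hsS⟩ ⟨k',hkm⟩)) (x ω' s k')
                - gradient (f (ω' ⟨s,hsS⟩ ⟨k',hkm⟩)) (xt ω' s) + gradient favg (xt ω' s), y⟫
            + (1 / (2 * η)) * ‖y - x ω' s k'‖ ^ 2 := hstep ω' ⟨s,hsS⟩ ⟨k',hkm⟩
        rw [hq'] at h1 h2
        rw [hωeq, hxt, hxk] at h1
        exact vr_prox_unique g hgconv (L*β/2) (by positivity) _ _ _ _ h1 h2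
      intro s k hsS hkm hteq
      match k with
      | Nat.succ k' => exact main s k' hsS (by omega) hteq
      | 0 =>
        match s, hsS, hteq with
        | 0, hsS, hteq => rw [hstart0, hstart0]
        | Nat.succ s'', hsS, hteq =>
          rw [hstart ω s'' hsS, hstart ω' s'' hsS]
          have hmm : m = (m - 1) + 1 := by omega
          rw [hmm]
          apply main s'' (m-1) (by omega) (by omega)
          have h2 : Nat.succ s'' * m = s'' * m + m := Nat.succ_mul s'' m
          omega
  -- external xt adaptedness
  have adaptxt : ∀ (s : ℕ), s ≤ S → ∀ ω ω' : Fin S → Fin m → Fin n,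
      (∀ (s' : Fin S) (k' : Fin m), (s' : ℕ) * m + (k' : ℕ) < s * m → ω s' k' = ω' s' k') →
      xt ω s = xt ω' s := by
    intro s hsS ω ω' hagree
    match s, hsS, hagree with
    | 0, hsS, hagree => rw [hxt0, hxt0]
    | Nat.succ s'', hsS, hagree =>
      have hs'' : s'' < S := lt_of_lt_of_le (Nat.lt_succ_self s'') hsS
      have hsnap1 : xt ω (s''+1) = (1/m:ℝ) • ∑ k ∈ Finset.range m, x ω s'' (k+1) :=
        hsnap ω ⟨s'', hs''⟩
      have hsnap2 : xt ω' (s''+1) = (1/m:ℝ) • ∑ k ∈ Finset.range m, x ω' s'' (k+1) :=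
        hsnap ω' ⟨s'', hs''⟩
      rw [hsnap1, hsnap2]
      congr 1
      apply Finset.sum_congr rfl
      intro k hk
      have hkm : k < m := Finset.mem_range.mp hk
      have hb : s'' * m + (k + 1) ≤ Nat.succ s'' * m := by
        have h2 : Nat.succ s'' * m = s'' * m + m := Nat.succ_mul s'' m
        omega
      exact adapt (s''*m + (k+1)) ω ω' (fun s' k' h => hagree s' k' (lt_of_lt_of_le h hb))
        s'' (k+1) hs'' (by omega) rfl
  -- convexity of F
  have hFconv : ConvexOn ℝ Set.univ F := by
    have hFf : F = fun z => favg z + g z := funext hF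
    rw [hFf]
    exact (vr_favg_conv hconv hfavg).add hgconv
  set N : ℝ := (Fintype.card (Fin S → Fin m → Fin n) : ℝ) with hN
  have hNpos : (0:ℝ) < N := by
    have hne : Nonempty (Fin S → Fin m → Fin n) := ⟨fun _ _ => ⟨0, hn⟩⟩
    rw [hN]
    exact_mod_cast Fintype.card_pos
  have hconst : ∀ c : ℝ, ∑ _ω : Fin S → Fin m → Fin n, c = N * c := by
    intro c
    rw [Finset.sum_const, Finset.card_univ, nsmul_eq_mul, hN]
  set A : ℕ → ℕ → ℝ := fun s k => ∑ ω : Fin S → Fin m → Fin n, F (x ω s k) with hA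
  set D : ℕ → ℕ → ℝ := fun s k => ∑ ω : Fin S → Fin m → Fin n, ‖x ω s k - xstar‖^2 with hD
  set At : ℕ → ℝ := fun s => ∑ ω : Fin S → Fin m → Fin n, F (xt ω s) with hAt
  -- the per-step expected inequality
  have star : ∀ (s : Fin S) (k : Fin m),
      A s ((k:ℕ)+1) ≤ N * F xstar
        + 2/(β-1) * ((A s k - N*F xstar) + (At s - N*F xstar))
        + (L*β/2) * (D s k - D s ((k:ℕ)+1)) := by
    intro s k
    have hper : ∀ ω, ∑ j, F (x (upd ω s k j) (s:ℕ) ((k:ℕ)+1)) ≤ (n:ℝ) * F xstar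
        + 2*n/(β-1) * ((F (x ω (s:ℕ) (k:ℕ)) - F xstar) + (F (xt ω (s:ℕ)) - F xstar))
        + (L*β/2) * ((n:ℝ)*‖x ω (s:ℕ) (k:ℕ) - xstar‖^2
            - ∑ j, ‖x (upd ω s k j) (s:ℕ) ((k:ℕ)+1) - xstar‖^2) := by
      intro ω
      have hagg : ∀ (s' : Fin S) (k' : Fin m) (j : Fin n),
          (s':ℕ)*m + (k':ℕ) < (s:ℕ)*m + (k:ℕ) → upd ω s k j s' k' = ω s' k' := by
        intro s' k' j hlt
        apply hupd_ne
        rintro ⟨rfl, rfl⟩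
        exact lt_irrefl _ hlt
      have e1 : ∀ j, x (upd ω s k j) (s:ℕ) (k:ℕ) = x ω (s:ℕ) (k:ℕ) := fun j =>
        adapt ((s:ℕ)*m + (k:ℕ)) _ _ (fun s' k' h => hagg s' k' j h) (s:ℕ) (k:ℕ)
          s.isLt (le_of_lt k.isLt) rfl
      have e2 : ∀ j, xt (upd ω s k j) (s:ℕ) = xt ω (s:ℕ) := fun j =>
        adaptxt (s:ℕ) (le_of_lt s.isLt) _ _
          (fun s' k' h => hagg s' k' j (lt_of_lt_of_le h (Nat.le_add_right _ _)))
      apply vr_key n hn L β hL hβ f hconv hdiff hlip favg hfavg g hgconv F hF xstar hmin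
      intro j y
      have h1 := hstep (upd ω s k j) s k y
      rw [hq', e1 j, e2 j, hupd_eval ω s k j] at h1
      exact h1
    have hsummed := Finset.sum_le_sum (fun ω (_ : ω ∈ Finset.univ) => hper ω)
    have calc1 : ∑ ω : Fin S → Fin m → Fin n, ∑ j, F (x (upd ω s k j) (s:ℕ) ((k:ℕ)+1))
        = (n:ℝ) * A (s:ℕ) ((k:ℕ)+1) := sum_upd (fun ω => F (x ω (s:ℕ) ((k:ℕ)+1))) s k
    have hD2 : ∑ ω : Fin S → Fin m → Fin n, ∑ j, ‖x (upd ω s k j) (s:ℕ) ((k:ℕ)+1) - xstar‖^2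
        = (n:ℝ) * D (s:ℕ) ((k:ℕ)+1) := sum_upd (fun ω => ‖x ω (s:ℕ) ((k:ℕ)+1) - xstar‖^2) s k
    have hR2 : ∑ ω : Fin S → Fin m → Fin n,
        ((F (x ω (s:ℕ) (k:ℕ)) - F xstar) + (F (xt ω (s:ℕ)) - F xstar))
        = (A (s:ℕ) (k:ℕ) - N * F xstar) + (At (s:ℕ) - N * F xstar) := by
      rw [Finset.sum_add_distrib, Finset.sum_sub_distrib, Finset.sum_sub_distrib, hconst]
    have calc2 : ∑ ω : Fin S → Fin m → Fin n, ((n:ℝ) * F xstar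
        + 2*n/(β-1) * ((F (x ω (s:ℕ) (k:ℕ)) - F xstar) + (F (xt ω (s:ℕ)) - F xstar))
        + (L*β/2) * ((n:ℝ)*‖x ω (s:ℕ) (k:ℕ) - xstar‖^2
            - ∑ j, ‖x (upd ω s k j) (s:ℕ) ((k:ℕ)+1) - xstar‖^2))
        = (n:ℝ) * (N * F xstar
          + 2/(β-1) * ((A (s:ℕ) (k:ℕ) - N*F xstar) + (At (s:ℕ) - N*F xstar))
          + (L*β/2) * (D (s:ℕ) (k:ℕ) - D (s:ℕ) ((k:ℕ)+1))) := by
      rw [Finset.sum_add_distrib, Finset.sum_add_distrib, hconst, ← Finset.mul_sum,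
        ← Finset.mul_sum, hR2, Finset.sum_sub_distrib, ← Finset.mul_sum, hD2]
      have hDk : ∑ ω : Fin S → Fin m → Fin n, ‖x ω (s:ℕ) (k:ℕ) - xstar‖^2 = D (s:ℕ) (k:ℕ) := rfl
      rw [hDk]
      field_simp
    rw [calc1, calc2] at hsummed
    exact le_of_mul_le_mul_left hsummed hn'
  -- Jensen for snapshots
  have jensen : ∀ ω (s : Fin S), F (xt ω ((s:ℕ)+1))
      ≤ (1/m:ℝ) * ∑ k ∈ Finset.range m, F (x ω (s:ℕ) (k+1)) := by
    intro ω s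
    rw [hsnap ω s]
    have hw : ∑ _k ∈ Finset.range m, (1/m:ℝ) = 1 := by
      rw [Finset.sum_const, Finset.card_range, nsmul_eq_mul]
      field_simp
    have hj := hFconv.map_sum_le (t := Finset.range m) (w := fun _ => (1/m:ℝ))
      (p := fun k => x ω (s:ℕ) (k+1)) (fun i _ => by positivity) hw (fun i _ => Set.mem_univ _)
    rw [← Finset.smul_sum] at hj
    calc F ((1/m:ℝ) • ∑ k ∈ Finset.range m, x ω (s:ℕ) (k+1))
        ≤ ∑ k ∈ Finset.range m, (1/m:ℝ) • F (x ω (s:ℕ) (k+1)) := hj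
      _ = (1/m:ℝ) * ∑ k ∈ Finset.range m, F (x ω (s:ℕ) (k+1)) := by
          rw [← Finset.smul_sum, smul_eq_mul]
  -- epoch inequality
  have epoch : ∀ s : ℕ, s < S →
      (1 - 2/(β-1)) * ((m:ℝ) * (At (s+1) - N*F xstar))
        ≤ 2/(β-1) * (A s 0 - A s m) + 2/(β-1) * ((m:ℝ) * (At s - N*F xstar))
          + (L*β/2) * (D s 0 - D s m) := by
    intro s hsS
    have hγ : (0:ℝ) < 1 - 2/(β-1) := by
      rw [sub_pos, div_lt_one hβ1]
      linarith
    have hterm : ∀ k, k < m → A s (k+1) - N*F xstar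
        ≤ 2/(β-1) * ((A s k - N*F xstar) + (At s - N*F xstar))
          + (L*β/2) * (D s k - D s (k+1)) := by
      intro k hk
      have := star ⟨s,hsS⟩ ⟨k,hk⟩
      linarith [this]
    have hstar_sum : ∑ k ∈ Finset.range m, (A s (k+1) - N*F xstar)
        ≤ 2/(β-1) * ((∑ k ∈ Finset.range m, (A s k - N*F xstar))
            + (m:ℝ)*(At s - N*F xstar))
          + (L*β/2) * (D s 0 - D s m) := by
      calc ∑ k ∈ Finset.range m, (A s (k+1) - N*F xstar)
          ≤ ∑ k ∈ Finset.range m, (2/(β-1) * ((A s k - N*F xstar) + (At s - N*F xstar))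
              + (L*β/2) * (D s k - D s (k+1))) :=
            Finset.sum_le_sum (fun k hk => hterm k (Finset.mem_range.mp hk))
        _ = 2/(β-1) * (∑ k ∈ Finset.range m, ((A s k - N*F xstar) + (At s - N*F xstar)))
            + (L*β/2) * (∑ k ∈ Finset.range m, (D s k - D s (k+1))) := by
            rw [Finset.sum_add_distrib, ← Finset.mul_sum, ← Finset.mul_sum]
        _ = 2/(β-1) * ((∑ k ∈ Finset.range m, (A s k - N*F xstar))
              + (m:ℝ)*(At s - N*F xstar))
            + (L*β/2) * (D s 0 - D s m) := by
            rw [Finset.sum_range_sub' (fun k => D s k), Finset.sum_add_distrib,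
              Finset.sum_const, Finset.card_range, nsmul_eq_mul]
    -- telescoping shift for A-sums
    have hshift : ∑ k ∈ Finset.range m, (A s k - N*F xstar)
        = (∑ k ∈ Finset.range m, (A s (k+1) - N*F xstar))
          + (A s 0 - N*F xstar) - (A s m - N*F xstar) := by
      have h1 : ∑ k ∈ Finset.range (m+1), (A s k - N*F xstar)
          = (∑ k ∈ Finset.range m, (A s (k+1) - N*F xstar)) + (A s 0 - N*F xstar) :=
        Finset.sum_range_succ' (fun k => A s k - N*F xstar) m
      have h2 : ∑ k ∈ Finset.range (m+1), (A s k - N*F xstar)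
          = (∑ k ∈ Finset.range m, (A s k - N*F xstar)) + (A s m - N*F xstar) :=
        Finset.sum_range_succ (fun k => A s k - N*F xstar) m
      linarith [h1, h2]
    -- Jensen summed
    have hjs : (m:ℝ) * (At (s+1) - N*F xstar)
        ≤ ∑ k ∈ Finset.range m, (A s (k+1) - N*F xstar) := by
      have h1 : At (s+1) ≤ (1/m:ℝ) * ∑ k ∈ Finset.range m, A s (k+1) := by
        calc At (s+1)
            ≤ ∑ ω : Fin S → Fin m → Fin n,
                ((1/m:ℝ) * ∑ k ∈ Finset.range m, F (x ω s (k+1))) :=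
              Finset.sum_le_sum (fun ω _ => jensen ω ⟨s,hsS⟩)
          _ = (1/m:ℝ) * ∑ ω : Fin S → Fin m → Fin n,
                ∑ k ∈ Finset.range m, F (x ω s (k+1)) := by rw [← Finset.mul_sum]
          _ = (1/m:ℝ) * ∑ k ∈ Finset.range m, A s (k+1) := by rw [Finset.sum_comm]
      have h2 : (m:ℝ) * At (s+1) ≤ ∑ k ∈ Finset.range m, A s (k+1) := by
        have h3 := mul_le_mul_of_nonneg_left h1 (le_of_lt hm')
        have h4 : (m:ℝ) * ((1/m:ℝ) * ∑ k ∈ Finset.range m, A s (k+1))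
            = ∑ k ∈ Finset.range m, A s (k+1) := by
          field_simp
        linarith [h3, h4]
      have h5 : ∑ k ∈ Finset.range m, (A s (k+1) - N*F xstar)
          = (∑ k ∈ Finset.range m, A s (k+1)) - (m:ℝ)*(N*F xstar) := by
        rw [Finset.sum_sub_distrib, Finset.sum_const, Finset.card_range, nsmul_eq_mul]
      nlinarith [h2, h5]
    -- combine
    set P : ℝ := ∑ k ∈ Finset.range m, (A s (k+1) - N*F xstar) with hP
    have hdist : 2/(β-1) * ((P + (A s 0 - N*F xstar) - (A s m - N*F xstar))
        + (m:ℝ)*(At s - N*F xstar))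
        = 2/(β-1) * P + 2/(β-1) * (A s 0 - A s m)
          + 2/(β-1) * ((m:ℝ)*(At s - N*F xstar)) := by ring
    rw [hshift] at hstar_sum
    rw [hdist] at hstar_sum
    have hfin1 : (1 - 2/(β-1)) * ((m:ℝ) * (At (s+1) - N*F xstar)) ≤ (1 - 2/(β-1)) * P :=
      mul_le_mul_of_nonneg_left hjs (le_of_lt hγ)
    have hfin2 : (1 - 2/(β-1)) * P = P - 2/(β-1) * P := by ring
    linarith [hfin1, hfin2, hstar_sum]
  -- telescoping over epochs
  set WA : ℕ → ℝ := fun s => if s < S then A s 0 else A (S-1) m with hWA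
  set WD : ℕ → ℝ := fun s => if s < S then D s 0 else D (S-1) m with hWD
  have hAeq : ∀ s : ℕ, s + 1 < S → A (s+1) 0 = A s m := by
    intro s h
    apply Finset.sum_congr rfl
    intro ω _
    rw [hstart ω s h]
  have hDeq : ∀ s : ℕ, s + 1 < S → D (s+1) 0 = D s m := by
    intro s h
    apply Finset.sum_congr rfl
    intro ω _
    rw [hstart ω s h]
  have hWAs : ∀ s ∈ Finset.range S, A s 0 - A s m = WA s - WA (s+1) := by
    intro s hs
    have hsS : s < S := Finset.mem_range.mp hs
    have h1 : WA s = A s 0 := by rw [hWA]; simp [hsS]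
    by_cases h2 : s + 1 < S
    · have h3 : WA (s+1) = A (s+1) 0 := by rw [hWA]; simp [h2]
      rw [h1, h3, hAeq s h2]
    · have hs1 : s = S - 1 := by omega
      have h3 : WA (s+1) = A (S-1) m := by rw [hWA]; simp [h2]
      rw [h1, h3, hs1]
  have hWDs : ∀ s ∈ Finset.range S, D s 0 - D s m = WD s - WD (s+1) := by
    intro s hs
    have hsS : s < S := Finset.mem_range.mp hs
    have h1 : WD s = D s 0 := by rw [hWD]; simp [hsS]
    by_cases h2 : s + 1 < S
    · have h3 : WD (s+1) = D (s+1) 0 := by rw [hWD]; simp [h2]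
      rw [h1, h3, hDeq s h2]
    · have hs1 : s = S - 1 := by omega
      have h3 : WD (s+1) = D (S-1) m := by rw [hWD]; simp [h2]
      rw [h1, h3, hs1]
  have htelA : ∑ s ∈ Finset.range S, (A s 0 - A s m) = A 0 0 - A (S-1) m := by
    rw [Finset.sum_congr rfl hWAs, Finset.sum_range_sub' WA]
    have h0 : WA 0 = A 0 0 := by rw [hWA]; simp [hS]
    have hSS : WA S = A (S-1) m := by rw [hWA]; simp
    rw [h0, hSS]
  have htelD : ∑ s ∈ Finset.range S, (D s 0 - D s m) = D 0 0 - D (S-1) m := by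
    rw [Finset.sum_congr rfl hWDs, Finset.sum_range_sub' WD]
    have h0 : WD 0 = D 0 0 := by rw [hWD]; simp [hS]
    have hSS : WD S = D (S-1) m := by rw [hWD]; simp
    rw [h0, hSS]
  -- boundary values
  have hA00 : A 0 0 = N * F xt0 := by
    calc A 0 0 = ∑ _ω : Fin S → Fin m → Fin n, F xt0 :=
        Finset.sum_congr rfl (fun ω _ => by rw [hstart0])
      _ = N * F xt0 := hconst _
  have hD00 : D 0 0 = N * ‖xt0 - xstar‖^2 := by
    calc D 0 0 = ∑ _ω : Fin S → Fin m → Fin n, ‖xt0 - xstar‖^2 :=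
        Finset.sum_congr rfl (fun ω _ => by rw [hstart0])
      _ = N * ‖xt0 - xstar‖^2 := hconst _
  have hAlast : N * F xstar ≤ A (S-1) m := by
    calc N * F xstar = ∑ _ω : Fin S → Fin m → Fin n, F xstar := (hconst _).symm
      _ ≤ A (S-1) m := Finset.sum_le_sum (fun ω _ => hmin _)
  have hDlast : 0 ≤ D (S-1) m := Finset.sum_nonneg (fun ω _ => by positivity)
  have hAt0 : At 0 = N * F xt0 := by
    calc At 0 = ∑ _ω : Fin S → Fin m → Fin n, F xt0 :=
        Finset.sum_congr rfl (fun ω _ => by rw [hxt0])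
      _ = N * F xt0 := hconst _
  have hAtS : N * F xstar ≤ At S := by
    calc N * F xstar = ∑ _ω : Fin S → Fin m → Fin n, F xstar := (hconst _).symm
      _ ≤ At S := Finset.sum_le_sum (fun ω _ => hmin _)
  set Sig : ℝ := ∑ s ∈ Finset.range S, (At (s+1) - N*F xstar) with hSig
  have hshiftS : ∑ s ∈ Finset.range S, (At s - N*F xstar)
      = Sig + (At 0 - N*F xstar) - (At S - N*F xstar) := by
    have h1 : ∑ s ∈ Finset.range (S+1), (At s - N*F xstar)
        = (∑ s ∈ Finset.range S, (At (s+1) - N*F xstar)) + (At 0 - N*F xstar) :=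
      Finset.sum_range_succ' (fun s => At s - N*F xstar) S
    have h2 : ∑ s ∈ Finset.range (S+1), (At s - N*F xstar)
        = (∑ s ∈ Finset.range S, (At s - N*F xstar)) + (At S - N*F xstar) :=
      Finset.sum_range_succ (fun s => At s - N*F xstar) S
    rw [hSig]
    linarith [h1, h2]
  -- summed epoch inequality
  have hsum_epoch : (1 - 2/(β-1)) * ((m:ℝ) * Sig)
      ≤ 2/(β-1) * (A 0 0 - A (S-1) m)
        + 2/(β-1) * ((m:ℝ) * (Sig + (At 0 - N*F xstar) - (At S - N*F xstar)))
        + (L*β/2) * (D 0 0 - D (S-1) m) := by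
    have h1 := Finset.sum_le_sum (fun s hs => epoch s (Finset.mem_range.mp hs))
    have hL1 : ∑ s ∈ Finset.range S, ((1 - 2/(β-1)) * ((m:ℝ) * (At (s+1) - N*F xstar)))
        = (1 - 2/(β-1)) * ((m:ℝ) * Sig) := by
      rw [← Finset.mul_sum, ← Finset.mul_sum]
    have hR1 : ∑ s ∈ Finset.range S, (2/(β-1) * (A s 0 - A s m)
        + 2/(β-1) * ((m:ℝ) * (At s - N*F xstar)) + (L*β/2) * (D s 0 - D s m))
        = 2/(β-1) * (A 0 0 - A (S-1) m)
          + 2/(β-1) * ((m:ℝ) * (Sig + (At 0 - N*F xstar) - (At S - N*F xstar)))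
          + (L*β/2) * (D 0 0 - D (S-1) m) := by
      rw [Finset.sum_add_distrib, Finset.sum_add_distrib, ← Finset.mul_sum, htelA,
        ← Finset.mul_sum, ← Finset.mul_sum, hshiftS, ← Finset.mul_sum, htelD]
    rw [hL1, hR1] at h1
    exact h1
  -- bound Sig
  have hSigBound : Sig ≤ N * (2*((m:ℝ)+1)/((β-5)*m) * (F xt0 - F xstar)
      + β*(β-1)*L/(2*(β-5)*m) * ‖xt0 - xstar‖^2) := by
    have hγnn : (0:ℝ) ≤ 2/(β-1) := by positivity
    have hTA : A 0 0 - A (S-1) m ≤ N * (F xt0 - F xstar) := by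
      rw [hA00]
      have : N * (F xt0 - F xstar) = N * F xt0 - N * F xstar := by ring
      linarith [hAlast]
    have hTD : D 0 0 - D (S-1) m ≤ N * ‖xt0 - xstar‖^2 := by
      rw [hD00]
      linarith [hDlast]
    have e2 : 2/(β-1) * (A 0 0 - A (S-1) m) ≤ 2/(β-1) * (N * (F xt0 - F xstar)) :=
      mul_le_mul_of_nonneg_left hTA hγnn
    have e4 : (L*β/2) * (D 0 0 - D (S-1) m) ≤ (L*β/2) * (N * ‖xt0 - xstar‖^2) :=
      mul_le_mul_of_nonneg_left hTD (by positivity)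
    have e5 : 2/(β-1) * ((m:ℝ) * (Sig + (At 0 - N*F xstar) - (At S - N*F xstar)))
        = 2/(β-1) * ((m:ℝ) * Sig) + 2/(β-1) * ((m:ℝ) * (At 0 - N*F xstar))
          - 2/(β-1) * ((m:ℝ) * (At S - N*F xstar)) := by ring
    have e6 : 0 ≤ 2/(β-1) * ((m:ℝ) * (At S - N*F xstar)) := by
      apply mul_nonneg hγnn
      apply mul_nonneg (le_of_lt hm')
      linarith [hAtS]
    have e7 : 2/(β-1) * ((m:ℝ) * (At 0 - N*F xstar))
        = 2/(β-1) * ((m:ℝ) * (N * (F xt0 - F xstar))) := by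
      rw [hAt0]
      ring
    -- combine to: ((β-5)/(β-1)) * (m * Sig) ≤ ...
    have hmain : (1 - 2/(β-1) - 2/(β-1)) * ((m:ℝ) * Sig)
        ≤ 2/(β-1) * (N * (F xt0 - F xstar))
          + 2/(β-1) * ((m:ℝ) * (N * (F xt0 - F xstar)))
          + (L*β/2) * (N * ‖xt0 - xstar‖^2) := by
      have expand : (1 - 2/(β-1) - 2/(β-1)) * ((m:ℝ) * Sig)
          = (1 - 2/(β-1)) * ((m:ℝ) * Sig) - 2/(β-1) * ((m:ℝ) * Sig) := by ring
      linarith [hsum_epoch, e2, e4, e5, e6, e7, expand]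
    have hb1 : (β-1) ≠ 0 := ne_of_gt hβ1
    have hb5 : (β-5) ≠ 0 := ne_of_gt hβ5
    have hm0 : (m:ℝ) ≠ 0 := ne_of_gt hm'
    have hcoefid : 1 - 2/(β-1) - 2/(β-1) = (β-5)/(β-1) := by
      field_simp
      ring
    rw [hcoefid] at hmain
    have ha : (0:ℝ) < (β-5)/(β-1) * (m:ℝ) := by positivity
    have hSig2 : Sig ≤ (2/(β-1) * (N * (F xt0 - F xstar))
          + 2/(β-1) * ((m:ℝ) * (N * (F xt0 - F xstar)))
          + (L*β/2) * (N * ‖xt0 - xstar‖^2)) / ((β-5)/(β-1) * (m:ℝ)) := by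
      rw [le_div_iff₀ ha]
      calc Sig * ((β-5)/(β-1) * (m:ℝ)) = (β-5)/(β-1) * ((m:ℝ) * Sig) := by ring
        _ ≤ _ := hmain
    calc Sig ≤ _ := hSig2
      _ = N * (2*((m:ℝ)+1)/((β-5)*m) * (F xt0 - F xstar)
          + β*(β-1)*L/(2*(β-5)*m) * ‖xt0 - xstar‖^2) := by
          field_simp
          ring
  -- output step
  have houtJ : ∀ ω, F (xhat ω) ≤ (1/S:ℝ) * ∑ s ∈ Finset.range S, F (xt ω (s+1)) := by
    intro ω
    have hw : ∑ _s ∈ Finset.range S, (1/S:ℝ) = 1 := by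
      rw [Finset.sum_const, Finset.card_range, nsmul_eq_mul]
      field_simp
    have hj := hFconv.map_sum_le (t := Finset.range S) (w := fun _ => (1/S:ℝ))
      (p := fun s => xt ω (s+1)) (fun i _ => by positivity) hw (fun i _ => Set.mem_univ _)
    rw [← Finset.smul_sum] at hj
    have hjS : F ((1/S:ℝ) • ∑ s ∈ Finset.range S, xt ω (s+1))
        ≤ (1/S:ℝ) * ∑ s ∈ Finset.range S, F (xt ω (s+1)) := by
      calc F ((1/S:ℝ) • ∑ s ∈ Finset.range S, xt ω (s+1))
          ≤ ∑ s ∈ Finset.range S, (1/S:ℝ) • F (xt ω (s+1)) := hj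
        _ = (1/S:ℝ) * ∑ s ∈ Finset.range S, F (xt ω (s+1)) := by
            rw [← Finset.smul_sum, smul_eq_mul]
    by_cases hc : F (xt ω S) ≤ F ((1/S:ℝ) • ∑ s ∈ Finset.range S, xt ω (s+1))
    · rw [(hout ω).1 hc]
      exact le_trans hc hjS
    · rw [(hout ω).2 hc]
      exact hjS
  have hsum_out : ∑ ω : Fin S → Fin m → Fin n, F (xhat ω) ≤ N * F xstar + (1/S:ℝ) * Sig := by
    have hstep1 : ∑ ω : Fin S → Fin m → Fin n, F (xhat ω)
        ≤ ∑ ω : Fin S → Fin m → Fin n, ((1/S:ℝ) * ∑ s ∈ Finset.range S, F (xt ω (s+1))) :=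
      Finset.sum_le_sum (fun ω _ => houtJ ω)
    have hstep2 : ∑ ω : Fin S → Fin m → Fin n, ((1/S:ℝ) * ∑ s ∈ Finset.range S, F (xt ω (s+1)))
        = (1/S:ℝ) * ∑ s ∈ Finset.range S, At (s+1) := by
      rw [← Finset.mul_sum, Finset.sum_comm]
    have hstep3 : ∑ s ∈ Finset.range S, At (s+1) = Sig + (S:ℝ)*(N*F xstar) := by
      rw [hSig, Finset.sum_sub_distrib, Finset.sum_const, Finset.card_range, nsmul_eq_mul]
      ring
    have hstep4 : (1/S:ℝ) * (Sig + (S:ℝ)*(N*F xstar)) = N*F xstar + (1/S:ℝ)*Sig := by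
      field_simp
      ring
    calc ∑ ω : Fin S → Fin m → Fin n, F (xhat ω)
        ≤ (1/S:ℝ) * ∑ s ∈ Finset.range S, At (s+1) := by rw [← hstep2]; exact hstep1
      _ = N*F xstar + (1/S:ℝ)*Sig := by rw [hstep3, hstep4]
  -- finish
  have hfin1 : N⁻¹ * ∑ ω : Fin S → Fin m → Fin n, F (xhat ω) - F xstar
      ≤ N⁻¹ * ((1/S:ℝ) * Sig) := by
    have h2 := mul_le_mul_of_nonneg_left hsum_out (le_of_lt (inv_pos.mpr hNpos))
    have h3 : N⁻¹ * (N*F xstar + (1/S:ℝ)*Sig) = F xstar + N⁻¹*((1/S:ℝ)*Sig) := by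
      field_simp
    linarith [h2, h3]
  have hfin2 : N⁻¹ * ((1/S:ℝ) * Sig)
      ≤ 2*((m:ℝ)+1)/((β-5)*m*S) * (F xt0 - F xstar)
        + β*(β-1)*L/(2*(β-5)*m*S) * ‖xt0 - xstar‖^2 := by
    have h1 : (N⁻¹*(1/S:ℝ)) * Sig ≤ (N⁻¹*(1/S:ℝ))
        * (N * (2*((m:ℝ)+1)/((β-5)*m) * (F xt0 - F xstar)
            + β*(β-1)*L/(2*(β-5)*m) * ‖xt0 - xstar‖^2)) :=
      mul_le_mul_of_nonneg_left hSigBound (by positivity)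
    have h2 : (N⁻¹*(1/S:ℝ)) * (N * (2*((m:ℝ)+1)/((β-5)*m) * (F xt0 - F xstar)
            + β*(β-1)*L/(2*(β-5)*m) * ‖xt0 - xstar‖^2))
        = 2*((m:ℝ)+1)/((β-5)*m*S) * (F xt0 - F xstar)
          + β*(β-1)*L/(2*(β-5)*m*S) * ‖xt0 - xstar‖^2 := by
      have hN0 : N ≠ 0 := ne_of_gt hNpos
      have hb5 : (β-5) ≠ 0 := ne_of_gt hβ5
      have hm0 : (m:ℝ) ≠ 0 := ne_of_gt hm'
      have hS0 : (S:ℝ) ≠ 0 := ne_of_gt hS'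
      field_simp
    calc N⁻¹ * ((1/S:ℝ) * Sig) = (N⁻¹*(1/S:ℝ)) * Sig := by ring
      _ ≤ _ := h1
      _ = _ := h2
  linarith [hfin1, hfin2]
end
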